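/- arXiv:1001.4565 — 5 statements merged into one kernel-verified Lean document; each statement's English description precedes it below -/
import Mathlib

section
/- Each operator S_l, for l ∈ L, is an isometry on L²(μ_B). -/
open MeasureTheory Complex Filter Topology

noncomputable section

/-- The complex exponential `e^{2π i t·x}`. -/
def expv {d : ℕ} (t x : Fin d → ℝ) : ℂ :=
  Complex.exp (2 * Real.pi * Complex.I * (∑ i, t i * x i))

/-- The integer matrix `R` viewed as a real matrix. -/
def Rmat {d : ℕ} (R : Matrix (Fin d) (Fin d) ℤ) : Matrix (Fin d) (Fin d) ℝ :=
  R.map Int.cast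

/-- An integer vector viewed as a real vector. -/
def vecR {d : ℕ} (b : Fin d → ℤ) : Fin d → ℝ := fun i => (b i : ℝ)

/-- The affine map `τ_b(x) = R⁻¹ (x + b)`. -/
def tauB {d : ℕ} (R : Matrix (Fin d) (Fin d) ℤ) (b : Fin d → ℤ) (x : Fin d → ℝ) :
    Fin d → ℝ :=
  (Rmat R)⁻¹.mulVec (x + vecR b)

/-- `R` is expansive: all (complex) eigenvalues, i.e. roots of the characteristic
polynomial, have absolute value strictly greater than `1`. -/
def Expansive {d : ℕ} (R : Matrix (Fin d) (Fin d) ℤ) : Prop :=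
  ∀ z : ℂ, (R.map (Int.cast : ℤ → ℂ)).charpoly.IsRoot z → 1 < ‖z‖

theorem aux_detne {d : ℕ} (R : Matrix (Fin d) (Fin d) ℤ) (h : Expansive R) :
    (Rmat R).det ≠ 0 := by
  have h1 : ((R.map (Int.cast : ℤ → ℂ)).det) ≠ 0 := by
    intro h0
    have := Matrix.det_eq_sign_charpoly_coeff (R.map (Int.cast : ℤ → ℂ))
    rw [h0, Polynomial.coeff_zero_eq_eval_zero] at this
    have hr : (R.map (Int.cast : ℤ → ℂ)).charpoly.IsRoot 0 := by
      have hne : ((-1 : ℂ)) ^ Fintype.card (Fin d) ≠ 0 := by simp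
      unfold Polynomial.IsRoot
      field_simp at this
      exact (mul_eq_zero.mp this.symm).resolve_left hne
    have h2 := h 0 hr
    rw [norm_zero] at h2
    exact absurd h2 (by norm_num)
  intro h0
  apply h1
  have h3 : (R.map (Int.cast : ℤ → ℂ)).det = ((R.det : ℤ) : ℂ) :=
    ((Int.castRingHom ℂ).map_det R).symm
  rw [h3]
  have h2 : (Rmat R).det = ((R.det : ℤ) : ℝ) := ((Int.castRingHom ℝ).map_det R).symm
  rw [h2] at h0
  exact_mod_cast h0

theorem stmt0
    (d N : ℕ) (R : Matrix (Fin d) (Fin d) ℤ) (hRexp : Expansive R)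
    (B : Finset (Fin d → ℤ)) (hB0 : (0 : Fin d → ℤ) ∈ B) (hBcard : B.card = N)
    (X : Set (Fin d → ℝ)) (hXc : IsCompact X) (hXne : X.Nonempty)
    (hX : X = ⋃ b ∈ B, tauB R b '' X)
    (μ : Measure (Fin d → ℝ)) [IsProbabilityMeasure μ]
    (hμinv : μ = (N : ENNReal)⁻¹ • ∑ b ∈ B, μ.map (tauB R b))
    (hμsupp : μ Xᶜ = 0)
    (hnooverlap : ∀ b ∈ B, ∀ b' ∈ B, b ≠ b' →
      μ (tauB R b '' X ∩ tauB R b' '' X) = 0)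
    (𝓡 : (Fin d → ℝ) → (Fin d → ℝ)) (h𝓡meas : Measurable 𝓡)
    (h𝓡 : ∀ b ∈ B, ∀ᵐ x ∂(μ.restrict (tauB R b '' X)),
      𝓡 x = (Rmat R).mulVec x - vecR b)
    (L : Finset (Fin d → ℤ)) (hL0 : (0 : Fin d → ℤ) ∈ L) (hLcard : L.card = N)
    (S : (Fin d → ℤ) → (Lp ℂ 2 μ →L[ℂ] Lp ℂ 2 μ))
    (hS : ∀ l ∈ L, ∀ f : Lp ℂ 2 μ,
      (S l f : (Fin d → ℝ) → ℂ) =ᵐ[μ] fun x => expv (vecR l) x * f (𝓡 x)) :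
    ∀ l ∈ L, ∀ f : Lp ℂ 2 μ, ‖S l f‖ = ‖f‖ := by
  intro l hl f
  have hBne : B.Nonempty := ⟨0, hB0⟩
  have hNpos : 0 < N := hBcard ▸ Finset.card_pos.mpr hBne
  have hdet := aux_detne R hRexp
  have hRinv : ∀ (b : Fin d → ℤ) (x : Fin d → ℝ),
      (Rmat R).mulVec (tauB R b x) - vecR b = x := by
    intro b x
    unfold tauB
    rw [Matrix.mulVec_mulVec, Matrix.mul_nonsing_inv _ (isUnit_iff_ne_zero.mpr hdet),
      Matrix.one_mulVec]
    simp
  have htaucont : ∀ b : Fin d → ℤ, Continuous (tauB R b) := by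
    intro b
    unfold tauB
    exact (Matrix.mulVecLin ((Rmat R)⁻¹)).continuous_of_finiteDimensional.comp
      (continuous_id.add continuous_const)
  have htaumeas : ∀ b : Fin d → ℤ, Measurable (tauB R b) := fun b => (htaucont b).measurable
  -- each composition 𝓡 ∘ τ_b is a.e. the identity, hence preserves μ
  have hcomp : ∀ b ∈ B, μ.map (𝓡 ∘ tauB R b) = μ := by
    intro b hb
    have hsc : IsCompact (tauB R b '' X) := hXc.image (htaucont b)
    set s := tauB R b '' X with hs
    have hsmeas : MeasurableSet s := hsc.measurableSet
    set bad := {y : Fin d → ℝ | ¬ 𝓡 y = (Rmat R).mulVec y - vecR b} with hbad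
    have hbad0 : μ.restrict s bad = 0 := h𝓡 b hb
    set E := toMeasurable (μ.restrict s) bad with hE
    have hEmeas : MeasurableSet E := measurableSet_toMeasurable _ _
    have hE0 : μ (E ∩ s) = 0 := by
      have := measure_toMeasurable (μ := μ.restrict s) bad
      rw [hbad0] at this
      rw [← Measure.restrict_apply hEmeas]
      exact this
    have hmapE : μ.map (tauB R b) (E ∩ s) = 0 := by
      have hmeasE : MeasurableSet (E ∩ s) := hEmeas.inter hsmeas
      have h1 : μ (E ∩ s) = (N : ENNReal)⁻¹ *
          ∑ b' ∈ B, μ.map (tauB R b') (E ∩ s) := by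
        conv_lhs => rw [hμinv]
        simp [Measure.smul_apply]
      rw [hE0] at h1
      have hNne : (N : ENNReal)⁻¹ ≠ 0 := by
        simp [ENNReal.inv_ne_zero]
      have hsum : ∑ b' ∈ B, μ.map (tauB R b') (E ∩ s) = 0 := by
        rcases mul_eq_zero.mp h1.symm with h | h
        · exact absurd h hNne
        · exact h
      exact (Finset.sum_eq_zero_iff.mp hsum) b hb
    have hpre0 : μ (tauB R b ⁻¹' (E ∩ s)) = 0 := by
      rw [← Measure.map_apply (htaumeas b) (hEmeas.inter hsmeas)]
      exact hmapE
    have haeeq : (𝓡 ∘ tauB R b) =ᵐ[μ] id := by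
      have hsub : {x : Fin d → ℝ | ¬ (𝓡 ∘ tauB R b) x = id x} ⊆
          Xᶜ ∪ tauB R b ⁻¹' (E ∩ s) := by
        intro x hx
        by_contra hc
        rw [Set.mem_union] at hc
        push_neg at hc
        obtain ⟨hx1, hx2⟩ := hc
        rw [Set.notMem_compl_iff] at hx1
        have hxs : tauB R b x ∈ s := Set.mem_image_of_mem _ hx1
        have hxE : tauB R b x ∉ E := fun h => hx2 ⟨h, hxs⟩
        have hxbad : tauB R b x ∉ bad := fun h => hxE (subset_toMeasurable _ _ h)
        simp only [hbad, Set.mem_setOf_eq, not_not] at hxbad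
        apply hx
        simp only [Function.comp_apply, id_eq, hxbad, hRinv b x]
      have : μ {x : Fin d → ℝ | ¬ (𝓡 ∘ tauB R b) x = id x} = 0 :=
        measure_mono_null hsub (measure_union_null hμsupp hpre0)
      exact this
    rw [Measure.map_congr haeeq, Measure.map_id]
  have hmap : μ.map 𝓡 = μ := by
    ext A hA
    rw [Measure.map_apply h𝓡meas hA]
    conv_lhs => rw [hμinv]
    rw [Measure.smul_apply, Measure.coe_finset_sum, Finset.sum_apply]
    have hterm : ∀ b ∈ B, μ.map (tauB R b) (𝓡 ⁻¹' A) = μ A := by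
      intro b hb
      rw [Measure.map_apply (htaumeas b) (h𝓡meas hA)]
      have h1 : μ (tauB R b ⁻¹' (𝓡 ⁻¹' A)) = μ.map (𝓡 ∘ tauB R b) A := by
        rw [Measure.map_apply (h𝓡meas.comp (htaumeas b)) hA, Set.preimage_comp]
      rw [h1, hcomp b hb]
    rw [Finset.sum_congr rfl hterm, Finset.sum_const, hBcard, nsmul_eq_mul, smul_eq_mul, ← mul_assoc,
      ENNReal.inv_mul_cancel (by exact_mod_cast hNpos.ne') (ENNReal.natCast_ne_top N), one_mul]
  have hmp : MeasurePreserving 𝓡 μ μ := ⟨h𝓡meas, hmap⟩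
  have h1 : eLpNorm (S l f : (Fin d → ℝ) → ℂ) 2 μ =
      eLpNorm (fun x => (f : (Fin d → ℝ) → ℂ) (𝓡 x)) 2 μ := by
    refine eLpNorm_congr_norm_ae ?_
    filter_upwards [hS l hl f] with x hx
    rw [hx, norm_mul]
    have hone : ‖expv (vecR l) x‖ = 1 := by
      unfold expv
      have hrw : 2 * (Real.pi : ℂ) * Complex.I * ((∑ i, vecR l i * x i : ℝ) : ℂ) =
          ((2 * Real.pi * ∑ i, vecR l i * x i : ℝ) : ℂ) * Complex.I := by
        push_cast
        ring
      rw [hrw, Complex.norm_exp_ofReal_mul_I]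
    rw [hone, one_mul]
  have h2 : eLpNorm (fun x => (f : (Fin d → ℝ) → ℂ) (𝓡 x)) 2 μ =
      eLpNorm (f : (Fin d → ℝ) → ℂ) 2 μ :=
    eLpNorm_comp_measurePreserving (Lp.aestronglyMeasurable f) hmp
  rw [Lp.norm_def, Lp.norm_def, h1, h2]
end
end

section
/- The operators (S_l)_{l∈L} satisfy the Cuntz relations S_l* S_{l'} = δ_{l,l'} I for all l, l' ∈ L and Σ_{l∈L} S_l S_l* = I on L²(μ_B) if and only if (B, L) is a Hadamard pair. -/
open MeasureTheory Complex Filter Topology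

noncomputable section

/-- The `N × N` matrix `(1/√N) (e^{2π i (R⁻¹ b) · l})_{b ∈ B, l ∈ L}`. -/
def hadMat {d : ℕ} (R : Matrix (Fin d) (Fin d) ℤ) (B L : Finset (Fin d → ℤ)) :
    Matrix B L ℂ :=
  fun b l => ((Real.sqrt (B.card) : ℝ) : ℂ)⁻¹ *
    expv ((Rmat R)⁻¹.mulVec (vecR (b : Fin d → ℤ))) (vecR (l : Fin d → ℤ))

/-- `(B, L)` is a Hadamard pair: the matrix `hadMat R B L` is unitary. -/
def IsHadamardPair {d : ℕ} (R : Matrix (Fin d) (Fin d) ℤ)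
    (B L : Finset (Fin d → ℤ)) : Prop :=
  (hadMat R B L).conjTranspose * hadMat R B L = 1 ∧ hadMat R B L * (hadMat R B L).conjTranspose = 1

namespace CuntzAux

variable {d : ℕ}

lemma expv_comm (t x : Fin d → ℝ) : expv t x = expv x t := by
  unfold expv
  have : (∑ i, t i * x i : ℝ) = ∑ i, x i * t i := Finset.sum_congr rfl fun i _ => mul_comm _ _
  rw [this]

lemma expv_zero_left (x : Fin d → ℝ) : expv 0 x = 1 := by
  simp [expv]

lemma expv_zero_right (t : Fin d → ℝ) : expv t 0 = 1 := by
  rw [expv_comm, expv_zero_left]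

lemma expv_add_right (t x y : Fin d → ℝ) : expv t (x + y) = expv t x * expv t y := by
  unfold expv
  rw [← Complex.exp_add]
  congr 1
  have : (∑ i, t i * (x + y) i : ℝ) = (∑ i, t i * x i) + ∑ i, t i * y i := by
    rw [← Finset.sum_add_distrib]; exact Finset.sum_congr rfl fun i _ => by simp [mul_add]
  rw [this]; push_cast; ring

lemma expv_add_left (t s x : Fin d → ℝ) : expv (t + s) x = expv t x * expv s x := by
  rw [expv_comm, expv_add_right, expv_comm x t, expv_comm x s]

lemma conj_expv (t x : Fin d → ℝ) : (starRingEnd ℂ) (expv t x) = expv (-t) x := by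
  unfold expv
  rw [← Complex.exp_conj]
  congr 1
  have : (∑ i, (-t) i * x i : ℝ) = -(∑ i, t i * x i) := by
    rw [← Finset.sum_neg_distrib]; exact Finset.sum_congr rfl fun i _ => by simp
  rw [this]
  push_cast
  simp [Complex.ext_iff]

lemma conj_expv_right (t x : Fin d → ℝ) : (starRingEnd ℂ) (expv t x) = expv t (-x) := by
  rw [conj_expv]
  unfold expv
  congr 2
  have : (∑ i, (-t) i * x i : ℝ) = ∑ i, t i * (-x) i :=
    Finset.sum_congr rfl fun i _ => by simp only [Pi.neg_apply]; ring
  rw [this]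

lemma norm_expv (t x : Fin d → ℝ) : ‖expv t x‖ = 1 := by
  unfold expv
  rw [Complex.norm_exp]
  have : (2 * ↑Real.pi * Complex.I * (∑ i, t i * x i : ℝ)).re = 0 := by
    simp [Complex.mul_re, Complex.mul_im]
  rw [this, Real.exp_zero]

lemma conj_expv_mul (t x : Fin d → ℝ) : (starRingEnd ℂ) (expv t x) * expv t x = 1 := by
  rw [conj_expv, ← expv_add_left]
  simp [expv_zero_left]

lemma expv_mul_conj (t x : Fin d → ℝ) : expv t x * (starRingEnd ℂ) (expv t x) = 1 := by
  rw [mul_comm]; exact conj_expv_mul t x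

lemma expv_mulVec (t : Fin d → ℝ) (M : Matrix (Fin d) (Fin d) ℝ) (y : Fin d → ℝ) :
    expv t (M.mulVec y) = expv (Matrix.vecMul t M) y := by
  unfold expv
  congr 2
  have h1 : (∑ i, t i * M.mulVec y i) = dotProduct t (M.mulVec y) := rfl
  have h2 : (∑ i, Matrix.vecMul t M i * y i) = dotProduct (Matrix.vecMul t M) y := rfl
  rw [h1, h2, Matrix.dotProduct_mulVec]

lemma continuous_expv (t : Fin d → ℝ) : Continuous (fun x : Fin d → ℝ => expv t x) := by
  unfold expv
  fun_prop

lemma det_ne_zero {R : Matrix (Fin d) (Fin d) ℤ} (h : Expansive R) :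
    IsUnit (Rmat R).det := by
  have hC : (R.map (Int.cast : ℤ → ℂ)).det ≠ 0 := by
    intro h0
    have hroot : (R.map (Int.cast : ℤ → ℂ)).charpoly.IsRoot 0 := by
      rw [Polynomial.IsRoot, ← Polynomial.coeff_zero_eq_eval_zero]
      have hdet := Matrix.det_eq_sign_charpoly_coeff (R.map (Int.cast : ℤ → ℂ))
      rw [h0] at hdet
      have hunit : ((-1 : ℂ)) ^ Fintype.card (Fin d) ≠ 0 := by simp
      field_simp at hdet
      rcases mul_eq_zero.mp hdet.symm with h1 | h1
      · exact absurd h1 hunit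
      · exact h1
    have := h 0 hroot
    rw [norm_zero] at this
    linarith
  have hZ : R.det ≠ 0 := by
    intro h0
    apply hC
    have := RingHom.map_det (Int.castRingHom ℂ) R
    rw [h0] at this
    simpa using this.symm
  have : (Rmat R).det = (R.det : ℝ) := by
    have := RingHom.map_det (Int.castRingHom ℝ) R
    simpa [Rmat, Matrix.map] using this.symm
  rw [this]
  simp [isUnit_iff_ne_zero]
  exact_mod_cast hZ

lemma mulVec_tauB {R : Matrix (Fin d) (Fin d) ℤ} (h : IsUnit (Rmat R).det)
    (b : Fin d → ℤ) (y : Fin d → ℝ) :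
    (Rmat R).mulVec (tauB R b y) - vecR b = y := by
  unfold tauB
  rw [Matrix.mulVec_mulVec, Matrix.mul_nonsing_inv _ h, Matrix.one_mulVec]
  simp

lemma tauB_sub {R : Matrix (Fin d) (Fin d) ℤ} (b b' : Fin d → ℤ) (x : Fin d → ℝ) :
    tauB R b x - tauB R b' x = (Rmat R)⁻¹.mulVec (vecR b - vecR b') := by
  unfold tauB
  rw [← Matrix.mulVec_sub, add_sub_add_left_eq_sub]

lemma tauB_eq (R : Matrix (Fin d) (Fin d) ℤ) (b : Fin d → ℤ) (x : Fin d → ℝ) :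
    tauB R b x = (Rmat R)⁻¹.mulVec x + (Rmat R)⁻¹.mulVec (vecR b) := by
  unfold tauB; rw [Matrix.mulVec_add]

lemma continuous_tauB (R : Matrix (Fin d) (Fin d) ℤ) (b : Fin d → ℤ) :
    Continuous (tauB R b) := by
  have hm : Continuous fun (x : Fin d → ℝ) => (Rmat R)⁻¹.mulVec x := by
    apply continuous_pi
    intro i
    simp only [Matrix.mulVec, dotProduct]
    exact continuous_finset_sum _ (fun j _ => continuous_const.mul (continuous_apply j))
  exact hm.comp (continuous_id.add continuous_const)

lemma measurable_tauB (R : Matrix (Fin d) (Fin d) ℤ) (b : Fin d → ℤ) :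
    Measurable (tauB R b) := (continuous_tauB R b).measurable

/-- product of two L² functions is integrable -/
lemma integrable_mul2 {α : Type*} [MeasurableSpace α] {μ : Measure α} {f g : α → ℂ}
    (hf : MemLp f 2 μ) (hg : MemLp g 2 μ) : Integrable (fun x => f x * g x) μ := by
  have hconj : MemLp (fun x => (starRingEnd ℂ) (f x)) 2 μ := by
    refine hf.of_le ?_ (Eventually.of_forall fun x => by simp)
    exact RCLike.continuous_conj.comp_aestronglyMeasurable hf.1
  have h1 := L2.integrable_inner (𝕜 := ℂ) (hconj.toLp _) (hg.toLp _)
  refine h1.congr ?_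
  filter_upwards [hconj.coeFn_toLp, hg.coeFn_toLp] with x h1x h2x
  rw [RCLike.inner_apply', h1x, h2x]
  simp

end CuntzAux

open CuntzAux

set_option maxHeartbeats 1000000 in
theorem stmt1
    (d N : ℕ) (R : Matrix (Fin d) (Fin d) ℤ) (hRexp : Expansive R)
    (B : Finset (Fin d → ℤ)) (hB0 : (0 : Fin d → ℤ) ∈ B) (hBcard : B.card = N)
    (X : Set (Fin d → ℝ)) (hXc : IsCompact X) (hXne : X.Nonempty)
    (hX : X = ⋃ b ∈ B, tauB R b '' X)
    (μ : Measure (Fin d → ℝ)) [IsProbabilityMeasure μ]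
    (hμinv : μ = (N : ENNReal)⁻¹ • ∑ b ∈ B, μ.map (tauB R b))
    (hμsupp : μ Xᶜ = 0)
    (hnooverlap : ∀ b ∈ B, ∀ b' ∈ B, b ≠ b' →
      μ (tauB R b '' X ∩ tauB R b' '' X) = 0)
    (𝓡 : (Fin d → ℝ) → (Fin d → ℝ)) (h𝓡meas : Measurable 𝓡)
    (h𝓡 : ∀ b ∈ B, ∀ᵐ x ∂(μ.restrict (tauB R b '' X)),
      𝓡 x = (Rmat R).mulVec x - vecR b)
    (L : Finset (Fin d → ℤ)) (hL0 : (0 : Fin d → ℤ) ∈ L) (hLcard : L.card = N)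
    (S : (Fin d → ℤ) → (Lp ℂ 2 μ →L[ℂ] Lp ℂ 2 μ))
    (hS : ∀ l ∈ L, ∀ f : Lp ℂ 2 μ,
      (S l f : (Fin d → ℝ) → ℂ) =ᵐ[μ] fun x => expv (vecR l) x * f (𝓡 x)) :
    ((∀ l ∈ L, ∀ l' ∈ L,
        (ContinuousLinearMap.adjoint (S l)).comp (S l') = if l = l' then 1 else 0) ∧
      ∑ l ∈ L, (S l).comp (ContinuousLinearMap.adjoint (S l)) = 1) ↔
    IsHadamardPair R B L := by
  classical
  -- basic numeric facts
  have hNpos : 0 < N := hBcard ▸ Finset.card_pos.mpr ⟨0, hB0⟩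
  have hN0C : (N : ℂ) ≠ 0 := by exact_mod_cast Nat.cast_ne_zero.mpr hNpos.ne'
  have hN0E : (N : ENNReal) ≠ 0 := by exact_mod_cast Nat.cast_ne_zero.mpr hNpos.ne'
  have hNtop : (N : ENNReal) ≠ ⊤ := ENNReal.natCast_ne_top N
  have hdet : IsUnit (Rmat R).det := det_ne_zero hRexp
  -- measure decomposition facts
  have hsum : (N : ENNReal) • μ = ∑ b ∈ B, μ.map (tauB R b) := by
    have h := congrArg (fun m : Measure (Fin d → ℝ) => (N : ENNReal) • m) hμinv
    simpa [smul_smul, ENNReal.mul_inv_cancel hN0E hNtop] using h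
  have hle : ∀ b ∈ B, μ.map (tauB R b) ≤ (N : ENNReal) • μ := by
    intro b hb
    rw [hsum]
    refine Measure.le_intro ?_
    intro s hs _
    rw [Measure.finset_sum_apply]
    exact Finset.single_le_sum (f := fun b => (μ.map (tauB R b)) s) (fun _ _ => zero_le) hb
  have hint_map : ∀ b ∈ B, ∀ {G : (Fin d → ℝ) → ℂ}, Integrable G μ →
      Integrable G (μ.map (tauB R b)) := by
    intro b hb G hG
    exact (hG.smul_measure hNtop).mono_measure (hle b hb)
  have hmem_map : ∀ b ∈ B, ∀ {G : (Fin d → ℝ) → ℂ}, MemLp G 2 μ →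
      MemLp G 2 (μ.map (tauB R b)) := by
    intro b hb G hG
    exact MemLp.mono_measure (hle b hb) (hG.smul_measure hNtop)
  have hcomp : ∀ b ∈ B, ∀ {G : (Fin d → ℝ) → ℂ}, MemLp G 2 μ →
      MemLp (fun y => G (tauB R b y)) 2 μ := by
    intro b hb G hG
    have h1 := hmem_map b hb hG
    exact (memLp_map_measure_iff h1.1 (measurable_tauB R b).aemeasurable).mp h1
  -- decomposition of integrals
  have hdecomp : ∀ G : (Fin d → ℝ) → ℂ, Integrable G μ →
      ∫ x, G x ∂μ = (N : ℂ)⁻¹ * ∑ b ∈ B, ∫ y, G (tauB R b y) ∂μ := by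
    intro G hG
    have h0 : ∫ x, G x ∂μ = ∫ x, G x ∂((N : ENNReal)⁻¹ • ∑ b ∈ B, μ.map (tauB R b)) := by
      conv_lhs => rw [hμinv]
    rw [h0, integral_smul_measure,
      integral_finset_sum_measure (fun b hb => hint_map b hb hG)]
    have h1 : ∀ b ∈ B, ∫ x, G x ∂(μ.map (tauB R b)) = ∫ y, G (tauB R b y) ∂μ := by
      intro b hb
      exact integral_map (measurable_tauB R b).aemeasurable (hint_map b hb hG).1
    rw [Finset.sum_congr rfl h1]
    have h2 : ((N : ENNReal)⁻¹).toReal = (N : ℝ)⁻¹ := by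
      rw [ENNReal.toReal_inv]; simp
    rw [h2, Complex.real_smul]
    push_cast
    ring
  -- the fixed point property : 𝓡 ∘ τ_b = id a.e.
  have hfix : ∀ b ∈ B, ∀ᵐ y ∂μ, 𝓡 (tauB R b y) = y := by
    intro b hb
    have hXm : MeasurableSet X := hXc.isClosed.measurableSet
    have himm : MeasurableSet (tauB R b '' X) :=
      (hXc.image (continuous_tauB R b)).isClosed.measurableSet
    have habs : μ.map (tauB R b) ≪ μ.restrict (tauB R b '' X) := by
      refine Measure.AbsolutelyContinuous.mk ?_
      intro s hs h0
      rw [Measure.restrict_apply hs] at h0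
      rw [Measure.map_apply (measurable_tauB R b) hs]
      have hsub : tauB R b ⁻¹' s ⊆ (tauB R b ⁻¹' (s ∩ tauB R b '' X)) ∪ Xᶜ := by
        intro y hy
        by_cases hyX : y ∈ X
        · exact Or.inl ⟨hy, Set.mem_image_of_mem _ hyX⟩
        · exact Or.inr hyX
      refine le_antisymm ?_ zero_le
      calc μ (tauB R b ⁻¹' s) ≤ μ ((tauB R b ⁻¹' (s ∩ tauB R b '' X)) ∪ Xᶜ) :=
            measure_mono hsub
        _ ≤ μ (tauB R b ⁻¹' (s ∩ tauB R b '' X)) + μ Xᶜ := measure_union_le _ _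
        _ = μ (tauB R b ⁻¹' (s ∩ tauB R b '' X)) := by rw [hμsupp, add_zero]
        _ = (μ.map (tauB R b)) (s ∩ tauB R b '' X) := by
            rw [Measure.map_apply (measurable_tauB R b) (hs.inter himm)]
        _ ≤ ((N : ENNReal) • μ) (s ∩ tauB R b '' X) := hle b hb _
        _ = (N : ENNReal) * μ (s ∩ tauB R b '' X) := by simp
        _ = 0 := by rw [h0, mul_zero]
    have hae : ∀ᵐ x ∂(μ.map (tauB R b)), 𝓡 x = (Rmat R).mulVec x - vecR b :=
      (h𝓡 b hb).filter_mono habs.ae_le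
    have hms : MeasurableSet {x : Fin d → ℝ | 𝓡 x = (Rmat R).mulVec x - vecR b} := by
      apply measurableSet_eq_fun h𝓡meas
      have : Continuous fun x : Fin d → ℝ => (Rmat R).mulVec x - vecR b := by
        have hm : Continuous fun (x : Fin d → ℝ) => (Rmat R).mulVec x := by
          apply continuous_pi
          intro i
          simp only [Matrix.mulVec, dotProduct]
          exact continuous_finset_sum _ (fun j _ => continuous_const.mul (continuous_apply j))
        exact hm.sub continuous_const
      exact this.measurable
    rw [ae_map_iff (measurable_tauB R b).aemeasurable hms] at hae
    filter_upwards [hae] with y hy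
    rw [hy, mulVec_tauB hdet]
  -- inner products
  have hinner : ∀ f g : Lp ℂ 2 μ,
      (inner ℂ f g : ℂ) = ∫ x, (starRingEnd ℂ) (f x) * g x ∂μ := by
    intro f g
    rw [L2.inner_def]
    congr 1
    funext x; exact RCLike.inner_apply' _ _
  -- the constant c(l, l')
  set cst : (Fin d → ℤ) → (Fin d → ℤ) → ℂ := fun l l' =>
    (N : ℂ)⁻¹ * ∑ b ∈ B, expv ((Rmat R)⁻¹.mulVec (vecR b)) (vecR l - vecR l') with hcst
  -- main inner product formula
  have hIP : ∀ l ∈ L, ∀ l' ∈ L, ∀ f g : Lp ℂ 2 μ,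
      (inner ℂ (S l' f) (S l g) : ℂ) = cst l l' *
        ∫ x, expv (Matrix.vecMul (vecR l - vecR l') (Rmat R)⁻¹) x *
          ((starRingEnd ℂ) (f x) * g x) ∂μ := by
    intro l hl l' hl' f g
    have hSf := hS l' hl' f
    have hSg := hS l hl g
    rw [hinner]
    set G : (Fin d → ℝ) → ℂ := fun x =>
      (starRingEnd ℂ) (expv (vecR l') x * (f : (Fin d → ℝ) → ℂ) (𝓡 x)) *
      (expv (vecR l) x * (g : (Fin d → ℝ) → ℂ) (𝓡 x)) with hGdef
    have e1 : (fun x => (starRingEnd ℂ) ((S l' f : (Fin d → ℝ) → ℂ) x) *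
        (S l g : (Fin d → ℝ) → ℂ) x) =ᵐ[μ] G := by
      filter_upwards [hSf, hSg] with x h1 h2
      rw [hGdef]; simp only; rw [h1, h2]
    have hGint : Integrable G μ := by
      have h0 := L2.integrable_inner (𝕜 := ℂ) (S l' f) (S l g)
      refine h0.congr ?_
      filter_upwards [e1] with x hx
      rw [RCLike.inner_apply']
      exact hx
    rw [integral_congr_ae e1, hdecomp G hGint]
    have e2 : ∀ b ∈ B, ∫ y, G (tauB R b y) ∂μ =
        expv ((Rmat R)⁻¹.mulVec (vecR b)) (vecR l - vecR l') *
        ∫ y, expv (Matrix.vecMul (vecR l - vecR l') (Rmat R)⁻¹) y *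
          ((starRingEnd ℂ) ((f : (Fin d → ℝ) → ℂ) y) * (g : (Fin d → ℝ) → ℂ) y) ∂μ := by
      intro b hb
      rw [← integral_const_mul]
      apply integral_congr_ae
      filter_upwards [hfix b hb] with y hy
      rw [hGdef]; simp only
      rw [hy, map_mul]
      have key : (starRingEnd ℂ) (expv (vecR l') (tauB R b y)) * expv (vecR l) (tauB R b y)
          = expv ((Rmat R)⁻¹.mulVec (vecR b)) (vecR l - vecR l') *
            expv (Matrix.vecMul (vecR l - vecR l') (Rmat R)⁻¹) y := by
        rw [conj_expv, ← expv_add_left]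
        have hsum2 : -vecR l' + vecR l = vecR l - vecR l' := by
          funext i; simp [sub_eq_neg_add]
        rw [hsum2, tauB_eq, expv_add_right, expv_mulVec,
          expv_comm (vecR l - vecR l') ((Rmat R)⁻¹.mulVec (vecR b))]
        ring
      calc (starRingEnd ℂ) (expv (vecR l') (tauB R b y)) *
            (starRingEnd ℂ) ((f : (Fin d → ℝ) → ℂ) y) *
            (expv (vecR l) (tauB R b y) * (g : (Fin d → ℝ) → ℂ) y)
          = ((starRingEnd ℂ) (expv (vecR l') (tauB R b y)) * expv (vecR l) (tauB R b y)) *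
            ((starRingEnd ℂ) ((f : (Fin d → ℝ) → ℂ) y) * (g : (Fin d → ℝ) → ℂ) y) := by ring
        _ = _ := by rw [key]; ring
    rw [Finset.sum_congr rfl e2, ← Finset.sum_mul, hcst]
    ring
  -- diagonal case
  have hIPdiag : ∀ l ∈ L, ∀ f g : Lp ℂ 2 μ,
      (inner ℂ (S l f) (S l g) : ℂ) = (inner ℂ f g : ℂ) := by
    intro l hl f g
    rw [hIP l hl l hl f g, hinner]
    have h1 : vecR l - vecR l = 0 := sub_self _
    rw [hcst]
    simp only [h1, Matrix.zero_vecMul, expv_zero_right, expv_zero_left, one_mul,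
      Finset.sum_const, nsmul_eq_mul, mul_one, hBcard]
    rw [inv_mul_cancel₀ hN0C, one_mul]
  -- operator relation ↔ inner product relation
  have hOp : ∀ l ∈ L, ∀ l' ∈ L,
      (((ContinuousLinearMap.adjoint (S l)).comp (S l') = if l = l' then 1 else 0) ↔
      (∀ f g : Lp ℂ 2 μ, (inner ℂ (S l' f) (S l g) : ℂ) =
        if l = l' then (inner ℂ f g : ℂ) else 0)) := by
    intro l hl l' hl'
    constructor
    · intro h f g
      have h1 : (ContinuousLinearMap.adjoint (S l)) (S l' f) =
          (if l = l' then (1 : Lp ℂ 2 μ →L[ℂ] Lp ℂ 2 μ) else 0) f := by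
        rw [← ContinuousLinearMap.comp_apply, h]
      have h2 := ContinuousLinearMap.adjoint_inner_left (S l) g (S l' f)
      rw [← h2, h1]
      split
      · rw [ContinuousLinearMap.one_apply]
      · rw [ContinuousLinearMap.zero_apply, inner_zero_left]
    · intro h
      refine ContinuousLinearMap.ext fun f => ?_
      apply ext_inner_right ℂ
      intro g
      rw [ContinuousLinearMap.comp_apply, ContinuousLinearMap.adjoint_inner_left, h f g]
      split
      · rw [ContinuousLinearMap.one_apply]
      · rw [ContinuousLinearMap.zero_apply, inner_zero_left]
  -- membership of exponentials in L²
  have hexp_mem : ∀ t : Fin d → ℝ, MemLp (fun y : Fin d → ℝ => expv t y) 2 μ := by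
    intro t
    refine (memLp_const (1 : ℂ)).of_le (continuous_expv t).aestronglyMeasurable ?_
    exact Eventually.of_forall fun x => by rw [norm_expv]; simp
  have hsqrt : ((Real.sqrt (B.card) : ℝ) : ℂ)⁻¹ * ((Real.sqrt (B.card) : ℝ) : ℂ)⁻¹
      = (N : ℂ)⁻¹ := by
    rw [← mul_inv, ← Complex.ofReal_mul, Real.mul_self_sqrt (Nat.cast_nonneg _), hBcard]
    norm_num
  -- entries of the matrix products
  have hHH_entry : ∀ li lj : {x // x ∈ L},
      ((hadMat R B L).conjTranspose * hadMat R B L) li lj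
        = cst (lj : Fin d → ℤ) (li : Fin d → ℤ) := by
    intro li lj
    rw [Matrix.mul_apply, hcst]
    simp only [Matrix.conjTranspose_apply, hadMat]
    rw [Finset.mul_sum, ← Finset.sum_coe_sort B]
    apply Finset.sum_congr rfl
    intro b _
    rw [RCLike.star_def, map_mul, map_inv₀, Complex.conj_ofReal, conj_expv_right]
    calc ((Real.sqrt (B.card) : ℝ) : ℂ)⁻¹ *
          expv ((Rmat R)⁻¹.mulVec (vecR (b : Fin d → ℤ))) (-(vecR (li : Fin d → ℤ))) *
          (((Real.sqrt (B.card) : ℝ) : ℂ)⁻¹ *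
          expv ((Rmat R)⁻¹.mulVec (vecR (b : Fin d → ℤ))) (vecR (lj : Fin d → ℤ)))
        = (((Real.sqrt (B.card) : ℝ) : ℂ)⁻¹ * ((Real.sqrt (B.card) : ℝ) : ℂ)⁻¹) *
          (expv ((Rmat R)⁻¹.mulVec (vecR (b : Fin d → ℤ))) (-(vecR (li : Fin d → ℤ))) *
           expv ((Rmat R)⁻¹.mulVec (vecR (b : Fin d → ℤ))) (vecR (lj : Fin d → ℤ))) := by ring
      _ = (N : ℂ)⁻¹ * expv ((Rmat R)⁻¹.mulVec (vecR (b : Fin d → ℤ)))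
            (vecR (lj : Fin d → ℤ) - vecR (li : Fin d → ℤ)) := by
          rw [hsqrt, ← expv_add_right, neg_add_eq_sub]
  have hBB_entry : ∀ bi bj : {x // x ∈ B},
      (hadMat R B L * (hadMat R B L).conjTranspose) bi bj
        = (N : ℂ)⁻¹ * ∑ l ∈ L, expv ((Rmat R)⁻¹.mulVec
            (vecR (bi : Fin d → ℤ) - vecR (bj : Fin d → ℤ))) (vecR l) := by
    intro bi bj
    rw [Matrix.mul_apply]
    simp only [Matrix.conjTranspose_apply, hadMat]
    rw [Finset.mul_sum, ← Finset.sum_coe_sort L]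
    apply Finset.sum_congr rfl
    intro l _
    rw [RCLike.star_def, map_mul, map_inv₀, Complex.conj_ofReal, conj_expv]
    calc ((Real.sqrt (B.card) : ℝ) : ℂ)⁻¹ *
          expv ((Rmat R)⁻¹.mulVec (vecR (bi : Fin d → ℤ))) (vecR (l : Fin d → ℤ)) *
          (((Real.sqrt (B.card) : ℝ) : ℂ)⁻¹ *
          expv (-((Rmat R)⁻¹.mulVec (vecR (bj : Fin d → ℤ)))) (vecR (l : Fin d → ℤ)))
        = (((Real.sqrt (B.card) : ℝ) : ℂ)⁻¹ * ((Real.sqrt (B.card) : ℝ) : ℂ)⁻¹) *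
          (expv ((Rmat R)⁻¹.mulVec (vecR (bi : Fin d → ℤ))) (vecR (l : Fin d → ℤ)) *
           expv (-((Rmat R)⁻¹.mulVec (vecR (bj : Fin d → ℤ)))) (vecR (l : Fin d → ℤ))) := by
          ring
      _ = (N : ℂ)⁻¹ * expv ((Rmat R)⁻¹.mulVec
            (vecR (bi : Fin d → ℤ) - vecR (bj : Fin d → ℤ))) (vecR (l : Fin d → ℤ)) := by
          rw [hsqrt, ← expv_add_left, ← sub_eq_add_neg, ← Matrix.mulVec_sub]
  -- cst on the diagonal
  have hcst_diag : ∀ l : Fin d → ℤ, cst l l = 1 := by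
    intro l
    rw [hcst]
    simp only [sub_self, expv_zero_right, Finset.sum_const, nsmul_eq_mul, mul_one, hBcard]
    exact inv_mul_cancel₀ hN0C
  constructor
  · rintro ⟨hrel1, _hrel2⟩
    have hHH1 : (hadMat R B L).conjTranspose * hadMat R B L = 1 := by
      ext li lj
      rw [hHH_entry li lj, Matrix.one_apply]
      by_cases hcase : li = lj
      · rw [if_pos hcase, hcase, hcst_diag]
      · rw [if_neg hcase]
        -- use the Cuntz relation with specific test functions
        set ξ : Fin d → ℝ :=
          Matrix.vecMul (vecR (lj : Fin d → ℤ) - vecR (li : Fin d → ℤ)) (Rmat R)⁻¹ with hξ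
        set f : Lp ℂ 2 μ := (memLp_const (1 : ℂ)).toLp _ with hf
        set g : Lp ℂ 2 μ := (hexp_mem (-ξ)).toLp _ with hg
        have hrel := (hOp (lj : Fin d → ℤ) lj.2 (li : Fin d → ℤ) li.2).mp
          (hrel1 (lj : Fin d → ℤ) lj.2 (li : Fin d → ℤ) li.2) f g
        have hne2 : (lj : Fin d → ℤ) ≠ (li : Fin d → ℤ) := by
          intro h; exact hcase (Subtype.ext h.symm)
        rw [if_neg hne2] at hrel
        rw [hIP (lj : Fin d → ℤ) lj.2 (li : Fin d → ℤ) li.2 f g] at hrel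
        have hI : ∫ x, expv ξ x * ((starRingEnd ℂ) ((f : (Fin d → ℝ) → ℂ) x) *
            (g : (Fin d → ℝ) → ℂ) x) ∂μ = 1 := by
          have he : (fun x => expv ξ x * ((starRingEnd ℂ) ((f : (Fin d → ℝ) → ℂ) x) *
              (g : (Fin d → ℝ) → ℂ) x)) =ᵐ[μ] fun _ => (1 : ℂ) := by
            filter_upwards [(memLp_const (1 : ℂ)).coeFn_toLp, (hexp_mem (-ξ)).coeFn_toLp]
              with x h1 h2
            rw [h1, h2, map_one, one_mul, ← expv_add_left, add_neg_cancel, expv_zero_left]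
          rw [integral_congr_ae he]
          simp
        rw [hI, mul_one] at hrel
        exact hrel
    refine ⟨hHH1, ?_⟩
    have hequiv : ({x // x ∈ L} ≃ {x // x ∈ B}) := by
      apply Fintype.equivOfCardEq
      simp [Fintype.card_coe, hLcard, hBcard]
    exact (Matrix.mul_eq_one_comm_of_equiv hequiv).mp hHH1
  · rintro ⟨hH1, hH2⟩
    constructor
    · intro l hl l' hl'
      apply (hOp l hl l' hl').mpr
      intro f g
      by_cases hll : l = l'
      · rw [if_pos hll, hll]
        exact hIPdiag l' hl' f g
      · rw [if_neg hll, hIP l hl l' hl' f g]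
        have hentry := hHH_entry ⟨l', hl'⟩ ⟨l, hl⟩
        rw [hH1] at hentry
        rw [Matrix.one_apply_ne (by intro h; exact hll (Subtype.ext_iff.mp h).symm)] at hentry
        rw [← hentry, zero_mul]
    · -- explicit formula for the adjoint
      have hconjmem : ∀ {F : (Fin d → ℝ) → ℂ}, MemLp F 2 μ →
          MemLp (fun x => (starRingEnd ℂ) (F x)) 2 μ := by
        intro F hF
        refine hF.of_le (RCLike.continuous_conj.comp_aestronglyMeasurable hF.1)
          (Eventually.of_forall fun x => by simp)
      have hEfmem : ∀ b ∈ B, ∀ (t : Fin d → ℝ) (F : (Fin d → ℝ) → ℂ), MemLp F 2 μ →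
          MemLp (fun x => expv t (tauB R b x) * F (tauB R b x)) 2 μ := by
        intro b hb t F hF
        have hFb := hcomp b hb hF
        refine hFb.of_le
          ((((continuous_expv t).comp (continuous_tauB R b)).aestronglyMeasurable).mul hFb.1)
          (Eventually.of_forall fun x => by rw [norm_mul, norm_expv, one_mul])
      set Tf : (Fin d → ℤ) → Lp ℂ 2 μ → (Fin d → ℝ) → ℂ := fun l f x =>
        (N : ℂ)⁻¹ * ∑ b ∈ B, expv (-(vecR l)) (tauB R b x) *
          (f : (Fin d → ℝ) → ℂ) (tauB R b x) with hTf
      have hTmem : ∀ (l : Fin d → ℤ) (f : Lp ℂ 2 μ), MemLp (Tf l f) 2 μ := by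
        intro l f
        rw [hTf]
        simp only
        refine MemLp.const_mul ?_ _
        exact memLp_finset_sum B (fun b hb => hEfmem b hb (-(vecR l)) _ (Lp.memLp f))
      have hadj : ∀ l ∈ L, ∀ f : Lp ℂ 2 μ,
          ContinuousLinearMap.adjoint (S l) f = (hTmem l f).toLp (Tf l f) := by
        intro l hl f
        apply ext_inner_right ℂ
        intro g
        rw [ContinuousLinearMap.adjoint_inner_left]
        rw [hinner, hinner]
        have hLHS : ∫ x, (starRingEnd ℂ) ((f : (Fin d → ℝ) → ℂ) x) *
              (S l g : (Fin d → ℝ) → ℂ) x ∂μ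
            = (N : ℂ)⁻¹ * ∑ b ∈ B, ∫ y, expv (vecR l) (tauB R b y) *
              (starRingEnd ℂ) ((f : (Fin d → ℝ) → ℂ) (tauB R b y)) *
              (g : (Fin d → ℝ) → ℂ) y ∂μ := by
          set Gf : (Fin d → ℝ) → ℂ := fun x => (starRingEnd ℂ) ((f : (Fin d → ℝ) → ℂ) x) *
            (expv (vecR l) x * (g : (Fin d → ℝ) → ℂ) (𝓡 x)) with hGf
          have e1 : (fun x => (starRingEnd ℂ) ((f : (Fin d → ℝ) → ℂ) x) *
              (S l g : (Fin d → ℝ) → ℂ) x) =ᵐ[μ] Gf := by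
            filter_upwards [hS l hl g] with x hx
            rw [hGf]; simp only; rw [hx]
          have hGint : Integrable Gf μ := by
            refine (L2.integrable_inner (𝕜 := ℂ) f (S l g)).congr ?_
            filter_upwards [e1] with x hx
            rw [RCLike.inner_apply']
            exact hx
          rw [integral_congr_ae e1, hdecomp Gf hGint]
          congr 1
          apply Finset.sum_congr rfl
          intro b hb
          apply integral_congr_ae
          filter_upwards [hfix b hb] with y hy
          rw [hGf]; simp only; rw [hy]; ring
        rw [hLHS]
        have e2 : (fun x => (starRingEnd ℂ) ((((hTmem l f).toLp (Tf l f)) :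
              (Fin d → ℝ) → ℂ) x) * (g : (Fin d → ℝ) → ℂ) x) =ᵐ[μ]
            fun x => (N : ℂ)⁻¹ * ∑ b ∈ B, expv (vecR l) (tauB R b x) *
              (starRingEnd ℂ) ((f : (Fin d → ℝ) → ℂ) (tauB R b x)) *
              (g : (Fin d → ℝ) → ℂ) x := by
          filter_upwards [(hTmem l f).coeFn_toLp] with x hx
          rw [hx, hTf]
          simp only
          rw [map_mul, map_inv₀, map_natCast, map_sum, mul_assoc, Finset.sum_mul]
          congr 1
          apply Finset.sum_congr rfl
          intro b _
          rw [map_mul, conj_expv, neg_neg]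
        rw [integral_congr_ae e2, integral_const_mul]
        congr 1
        rw [integral_finset_sum B]
        intro b hb
        exact integrable_mul2 (hEfmem b hb (vecR l) _ (hconjmem (Lp.memLp f))) (Lp.memLp g)
      -- the key orthogonality constant
      have hK : ∀ b ∈ B, ∀ b' ∈ B,
          (∑ l ∈ L, expv ((Rmat R)⁻¹.mulVec (vecR b - vecR b')) (vecR l))
            = if b = b' then (N : ℂ) else 0 := by
        intro b hb b' hb'
        have h := hBB_entry ⟨b, hb⟩ ⟨b', hb'⟩
        rw [hH2] at h
        by_cases hbb : b = b'
        · rw [if_pos hbb]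
          subst hbb
          rw [Matrix.one_apply_eq] at h
          have h' := congrArg (fun z => (N : ℂ) * z) h
          simp only [mul_one, ← mul_assoc, mul_inv_cancel₀ hN0C, one_mul] at h'
          exact h'.symm
        · rw [if_neg hbb]
          rw [Matrix.one_apply_ne (fun hh => hbb (Subtype.ext_iff.mp hh))] at h
          have h' := congrArg (fun z => (N : ℂ) * z) h
          simp only [mul_zero, ← mul_assoc, mul_inv_cancel₀ hN0C, one_mul] at h'
          exact h'.symm
      -- pointwise identity
      have hpt : ∀ (f g : Lp ℂ 2 μ) (x : Fin d → ℝ),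
          (∑ l ∈ L, (starRingEnd ℂ) ((Tf l f) x) * (Tf l g) x)
            = (N : ℂ)⁻¹ * ∑ b ∈ B, (starRingEnd ℂ) ((f : (Fin d → ℝ) → ℂ) (tauB R b x)) *
              (g : (Fin d → ℝ) → ℂ) (tauB R b x) := by
        intro f g x
        have hTconj : ∀ l : Fin d → ℤ, (starRingEnd ℂ) ((Tf l f) x)
            = (N : ℂ)⁻¹ * ∑ b ∈ B, expv (vecR l) (tauB R b x) *
              (starRingEnd ℂ) ((f : (Fin d → ℝ) → ℂ) (tauB R b x)) := by
          intro l
          rw [hTf]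
          simp only
          rw [map_mul, map_inv₀, map_natCast, map_sum]
          congr 1
          apply Finset.sum_congr rfl
          intro b _
          rw [map_mul, conj_expv, neg_neg]
        calc ∑ l ∈ L, (starRingEnd ℂ) ((Tf l f) x) * (Tf l g) x
            = ∑ l ∈ L, (N : ℂ)⁻¹ * (N : ℂ)⁻¹ * ∑ b ∈ B, ∑ b' ∈ B,
                (expv (vecR l) (tauB R b x) *
                  (starRingEnd ℂ) ((f : (Fin d → ℝ) → ℂ) (tauB R b x))) *
                (expv (-(vecR l)) (tauB R b' x) *
                  (g : (Fin d → ℝ) → ℂ) (tauB R b' x)) := by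
              apply Finset.sum_congr rfl
              intro l _
              rw [hTconj l, hTf]
              simp only
              rw [show ((N : ℂ)⁻¹ * ∑ b ∈ B, expv (vecR l) (tauB R b x) *
                  (starRingEnd ℂ) ((f : (Fin d → ℝ) → ℂ) (tauB R b x))) *
                  ((N : ℂ)⁻¹ * ∑ b' ∈ B, expv (-(vecR l)) (tauB R b' x) *
                  (g : (Fin d → ℝ) → ℂ) (tauB R b' x))
                = (N : ℂ)⁻¹ * (N : ℂ)⁻¹ * ((∑ b ∈ B, expv (vecR l) (tauB R b x) *
                  (starRingEnd ℂ) ((f : (Fin d → ℝ) → ℂ) (tauB R b x))) *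
                  (∑ b' ∈ B, expv (-(vecR l)) (tauB R b' x) *
                  (g : (Fin d → ℝ) → ℂ) (tauB R b' x))) from by ring]
              rw [Finset.sum_mul_sum]
          _ = (N : ℂ)⁻¹ * (N : ℂ)⁻¹ * ∑ b ∈ B, ∑ b' ∈ B,
                (∑ l ∈ L, expv ((Rmat R)⁻¹.mulVec (vecR b - vecR b')) (vecR l)) *
                ((starRingEnd ℂ) ((f : (Fin d → ℝ) → ℂ) (tauB R b x)) *
                 (g : (Fin d → ℝ) → ℂ) (tauB R b' x)) := by
              rw [← Finset.mul_sum, Finset.sum_comm]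
              congr 1
              apply Finset.sum_congr rfl
              intro b _
              rw [Finset.sum_comm]
              apply Finset.sum_congr rfl
              intro b' _
              rw [Finset.sum_mul]
              apply Finset.sum_congr rfl
              intro l _
              have hprod : expv (vecR l) (tauB R b x) * expv (-(vecR l)) (tauB R b' x)
                  = expv ((Rmat R)⁻¹.mulVec (vecR b - vecR b')) (vecR l) := by
                rw [← conj_expv, conj_expv_right, ← expv_add_right, ← sub_eq_add_neg,
                  tauB_sub, expv_comm]
              calc (expv (vecR l) (tauB R b x) *
                    (starRingEnd ℂ) ((f : (Fin d → ℝ) → ℂ) (tauB R b x))) *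
                  (expv (-(vecR l)) (tauB R b' x) * (g : (Fin d → ℝ) → ℂ) (tauB R b' x))
                  = (expv (vecR l) (tauB R b x) * expv (-(vecR l)) (tauB R b' x)) *
                    ((starRingEnd ℂ) ((f : (Fin d → ℝ) → ℂ) (tauB R b x)) *
                     (g : (Fin d → ℝ) → ℂ) (tauB R b' x)) := by ring
                _ = _ := by rw [hprod]
          _ = (N : ℂ)⁻¹ * (N : ℂ)⁻¹ * ∑ b ∈ B, (N : ℂ) *
                ((starRingEnd ℂ) ((f : (Fin d → ℝ) → ℂ) (tauB R b x)) *
                 (g : (Fin d → ℝ) → ℂ) (tauB R b x)) := by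
              congr 1
              apply Finset.sum_congr rfl
              intro b hb
              rw [Finset.sum_congr rfl (fun b' hb' => by
                rw [hK b hb b' hb', ite_mul, zero_mul])]
              rw [Finset.sum_ite_eq B b (fun b' => (N : ℂ) *
                ((starRingEnd ℂ) ((f : (Fin d → ℝ) → ℂ) (tauB R b x)) *
                 (g : (Fin d → ℝ) → ℂ) (tauB R b' x))), if_pos hb]
          _ = (N : ℂ)⁻¹ * ∑ b ∈ B, (starRingEnd ℂ) ((f : (Fin d → ℝ) → ℂ) (tauB R b x)) *
                (g : (Fin d → ℝ) → ℂ) (tauB R b x) := by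
              rw [← Finset.mul_sum, ← mul_assoc]
              congr 1
              field_simp
      -- conclude the second Cuntz relation
      refine ContinuousLinearMap.ext fun f => ?_
      apply ext_inner_right ℂ
      intro g
      rw [ContinuousLinearMap.sum_apply, sum_inner, ContinuousLinearMap.one_apply]
      have hterm : ∀ l ∈ L, (inner ℂ (((S l).comp (ContinuousLinearMap.adjoint (S l))) f) g : ℂ)
          = ∫ x, (starRingEnd ℂ) ((Tf l f) x) * (Tf l g) x ∂μ := by
        intro l hl
        rw [ContinuousLinearMap.comp_apply, ← ContinuousLinearMap.adjoint_inner_right]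
        rw [hadj l hl f, hadj l hl g, hinner]
        apply integral_congr_ae
        filter_upwards [(hTmem l f).coeFn_toLp, (hTmem l g).coeFn_toLp] with x h1 h2
        rw [h1, h2]
      rw [Finset.sum_congr rfl hterm]
      calc ∑ l ∈ L, ∫ x, (starRingEnd ℂ) ((Tf l f) x) * (Tf l g) x ∂μ
          = ∫ x, ∑ l ∈ L, (starRingEnd ℂ) ((Tf l f) x) * (Tf l g) x ∂μ := by
            rw [integral_finset_sum L]
            intro l _
            exact integrable_mul2 (hconjmem (hTmem l f)) (hTmem l g)
        _ = ∫ x, (N : ℂ)⁻¹ * ∑ b ∈ B, (starRingEnd ℂ)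
              ((f : (Fin d → ℝ) → ℂ) (tauB R b x)) *
              (g : (Fin d → ℝ) → ℂ) (tauB R b x) ∂μ :=
            integral_congr_ae (Eventually.of_forall fun x => hpt f g x)
        _ = (N : ℂ)⁻¹ * ∑ b ∈ B, ∫ x, (starRingEnd ℂ)
              ((f : (Fin d → ℝ) → ℂ) (tauB R b x)) *
              (g : (Fin d → ℝ) → ℂ) (tauB R b x) ∂μ := by
            rw [integral_const_mul]
            congr 1
            rw [integral_finset_sum B]
            intro b hb
            exact integrable_mul2 (hcomp b hb (hconjmem (Lp.memLp f))) (hcomp b hb (Lp.memLp g))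
        _ = ∫ x, (starRingEnd ℂ) ((f : (Fin d → ℝ) → ℂ) x) * (g : (Fin d → ℝ) → ℂ) x ∂μ :=
            (hdecomp (fun x => (starRingEnd ℂ) ((f : (Fin d → ℝ) → ℂ) x) *
              (g : (Fin d → ℝ) → ℂ) x) (integrable_mul2 (hconjmem (Lp.memLp f))
              (Lp.memLp g))).symm
        _ = (inner ℂ f g : ℂ) := (hinner f g).symm
end
end

section
/- For all l ∈ L and t ∈ ℝ^d, S_l* e_t = χ_B(−τ_l(−t)) · e_{−τ_l(−t)} in L²(μ_B), where τ_l(x) = (R^T)⁻¹(x+l). Consequently, if H is a reducing subspace of L²(μ_B) for the operators (S_l)_{l∈L} with e_t ∈ H and χ_B(−τ_l(−t)) ≠ 0, then e_{−τ_l(−t)} ∈ H. -/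
open MeasureTheory Complex Filter Topology Matrix

noncomputable section

/-- The dual map `τ_l(x) = (Rᵀ)⁻¹ (x + l)`. -/
def tauL {d : ℕ} (R : Matrix (Fin d) (Fin d) ℤ) (l : Fin d → ℤ) (x : Fin d → ℝ) :
    Fin d → ℝ :=
  ((Rmat R).transpose)⁻¹.mulVec (x + vecR l)

/-- `χ_B(x) = (1/N) ∑_{b ∈ B} e^{2π i b · x}`. -/
def chiB {d : ℕ} (B : Finset (Fin d → ℤ)) (x : Fin d → ℝ) : ℂ :=
  (B.card : ℂ)⁻¹ * ∑ b ∈ B, expv (vecR b) x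

lemma expv_add_left {d : ℕ} (t u x : Fin d → ℝ) :
    expv (t + u) x = expv t x * expv u x := by
  unfold expv
  rw [← Complex.exp_add]
  congr 1
  have : (∑ i, (t + u) i * x i) = (∑ i, t i * x i) + (∑ i, u i * x i) := by
    rw [← Finset.sum_add_distrib]
    exact Finset.sum_congr rfl fun i _ => by simp [add_mul]
  rw [this]; push_cast; ring

lemma expv_add_right {d : ℕ} (t x y : Fin d → ℝ) :
    expv t (x + y) = expv t x * expv t y := by
  unfold expv
  rw [← Complex.exp_add]
  congr 1
  have : (∑ i, t i * (x + y) i) = (∑ i, t i * x i) + (∑ i, t i * y i) := by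
    rw [← Finset.sum_add_distrib]
    exact Finset.sum_congr rfl fun i _ => by simp [mul_add]
  rw [this]; push_cast; ring

lemma conj_expv {d : ℕ} (t x : Fin d → ℝ) :
    (starRingEnd ℂ) (expv t x) = expv (-t) x := by
  unfold expv
  rw [← Complex.exp_conj]
  congr 1
  have : (∑ i, (-t) i * x i) = -(∑ i, t i * x i) := by
    simp [neg_mul]
  rw [this]
  simp only [_root_.map_mul, Complex.conj_I, Complex.conj_ofReal, map_ofNat]
  push_cast; ring

lemma expv_neg_comm {d : ℕ} (t x : Fin d → ℝ) :
    expv (-t) x = expv (-x) t := by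
  unfold expv
  congr 2
  rw [Finset.sum_congr rfl fun i _ => ?_]
  simp; ring

lemma norm_expv_le {d : ℕ} (t x : Fin d → ℝ) : ‖expv t x‖ ≤ 1 := by
  unfold expv
  rw [Complex.norm_exp]
  simp [Complex.mul_re, Complex.mul_im]

lemma expv_mulVec {d : ℕ} (A : Matrix (Fin d) (Fin d) ℝ) (t y : Fin d → ℝ) :
    expv t (A.mulVec y) = expv (A.transpose.mulVec t) y := by
  unfold expv
  congr 2
  norm_cast
  show t ⬝ᵥ (A *ᵥ y) = (Aᵀ *ᵥ t) ⬝ᵥ y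
  rw [Matrix.dotProduct_mulVec, Matrix.mulVec_transpose]

lemma integral_split {α ι : Type*} [MeasurableSpace α] (μ : Measure α) (B : Finset ι)
    (T : ι → α → α) (N : ℕ)
    (hμinv : μ = (N : ENNReal)⁻¹ • ∑ b ∈ B, μ.map (T b)) (F : α → ℂ)
    (hint : ∀ b ∈ B, Integrable F (μ.map (T b))) :
    ∫ x, F x ∂μ = ((N : ENNReal)⁻¹).toReal • ∑ b ∈ B, ∫ x, F x ∂(μ.map (T b)) := by
  conv_lhs => rw [hμinv]
  rw [integral_smul_measure, integral_finset_sum_measure hint]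

theorem stmt3
    (d N : ℕ) (R : Matrix (Fin d) (Fin d) ℤ) (hRexp : Expansive R)
    (B : Finset (Fin d → ℤ)) (hB0 : (0 : Fin d → ℤ) ∈ B) (hBcard : B.card = N)
    (X : Set (Fin d → ℝ)) (hXc : IsCompact X) (hXne : X.Nonempty)
    (hX : X = ⋃ b ∈ B, tauB R b '' X)
    (μ : Measure (Fin d → ℝ)) [IsProbabilityMeasure μ]
    (hμinv : μ = (N : ENNReal)⁻¹ • ∑ b ∈ B, μ.map (tauB R b))
    (hμsupp : μ Xᶜ = 0)
    (hnooverlap : ∀ b ∈ B, ∀ b' ∈ B, b ≠ b' →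
      μ (tauB R b '' X ∩ tauB R b' '' X) = 0)
    (𝓡 : (Fin d → ℝ) → (Fin d → ℝ)) (h𝓡meas : Measurable 𝓡)
    (h𝓡 : ∀ b ∈ B, ∀ᵐ x ∂(μ.restrict (tauB R b '' X)),
      𝓡 x = (Rmat R).mulVec x - vecR b)
    (L : Finset (Fin d → ℤ)) (hL0 : (0 : Fin d → ℤ) ∈ L) (hLcard : L.card = N)
    (S : (Fin d → ℤ) → (Lp ℂ 2 μ →L[ℂ] Lp ℂ 2 μ))
    (hS : ∀ l ∈ L, ∀ f : Lp ℂ 2 μ,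
      (S l f : (Fin d → ℝ) → ℂ) =ᵐ[μ] fun x => expv (vecR l) x * f (𝓡 x))
    (E : (Fin d → ℝ) → Lp ℂ 2 μ)
    (hE : ∀ t : Fin d → ℝ, (E t : (Fin d → ℝ) → ℂ) =ᵐ[μ] fun x => expv t x) :
    (∀ l ∈ L, ∀ t : Fin d → ℝ,
      ContinuousLinearMap.adjoint (S l) (E t) =
        chiB B (-(tauL R l (-t))) • E (-(tauL R l (-t)))) ∧
    (∀ H : Submodule ℂ (Lp ℂ 2 μ), IsClosed (H : Set (Lp ℂ 2 μ)) →
      (∀ l ∈ L, ∀ f ∈ H, S l f ∈ H ∧ ContinuousLinearMap.adjoint (S l) f ∈ H) →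
      ∀ t : Fin d → ℝ, E t ∈ H →
      ∀ l ∈ L, chiB B (-(tauL R l (-t))) ≠ 0 → E (-(tauL R l (-t))) ∈ H) := by
  -- N is positive
  have hNpos : 0 < N := hBcard ▸ Finset.card_pos.mpr ⟨0, hB0⟩
  -- determinant nonzero
  have hdet : (Rmat R).det ≠ 0 := by
    have hdZ : R.det ≠ 0 := by
      intro h
      have hC : (R.map (Int.cast : ℤ → ℂ)).det = 0 := by
        have h4 := (RingHom.map_det (Int.castRingHom ℂ) R).symm
        simp only [RingHom.mapMatrix_apply] at h4
        rw [show R.map (Int.cast : ℤ → ℂ) = R.map (Int.castRingHom ℂ) from rfl, h4, h]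
        simp
      have hroot : (R.map (Int.cast : ℤ → ℂ)).charpoly.IsRoot 0 := by
        have h2 := Matrix.det_eq_sign_charpoly_coeff (R.map (Int.cast : ℤ → ℂ))
        rw [hC] at h2
        have : (R.map (Int.cast : ℤ → ℂ)).charpoly.coeff 0 = 0 := by
          rcases mul_eq_zero.mp h2.symm with h3 | h3
          · exact absurd h3 (pow_ne_zero _ (by norm_num))
          · exact h3
        simpa [Polynomial.IsRoot, ← Polynomial.coeff_zero_eq_eval_zero] using this
      have := hRexp 0 hroot
      norm_num at this
    have : (Rmat R).det = ((R.det : ℤ) : ℝ) := by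
      have h4 := (RingHom.map_det (Int.castRingHom ℝ) R).symm
      simp only [RingHom.mapMatrix_apply] at h4
      rw [show Rmat R = R.map (Int.castRingHom ℝ) from rfl, h4]; rfl
    rw [this]
    exact_mod_cast hdZ
  have hdetU : IsUnit (Rmat R).det := isUnit_iff_ne_zero.mpr hdet
  have hRR : ∀ v : Fin d → ℝ, (Rmat R).mulVec ((Rmat R)⁻¹.mulVec v) = v := by
    intro v
    rw [Matrix.mulVec_mulVec, Matrix.mul_nonsing_inv _ hdetU, Matrix.one_mulVec]
  -- continuity / measurability of tauB
  have htauBc : ∀ b : Fin d → ℤ, Continuous (tauB R b) := by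
    intro b
    show Continuous fun x => (Rmat R)⁻¹.mulVecLin (x + vecR b)
    exact (Rmat R)⁻¹.mulVecLin.continuous_of_finiteDimensional.comp
      (continuous_id.add continuous_const)
  have htauBmeas : ∀ b : Fin d → ℤ, Measurable (tauB R b) := fun b => (htauBc b).measurable
  -- a.e. x is in X
  have hXae : ∀ᵐ x ∂μ, x ∈ X := by
    rw [ae_iff]
    exact hμsupp
  -- sum of mapped measures equals N • μ
  have hsum : ∑ b ∈ B, μ.map (tauB R b) = (N : ENNReal) • μ := by
    conv_rhs => rw [hμinv]
    rw [smul_smul, ENNReal.mul_inv_cancel (by exact_mod_cast hNpos.ne') (by simp), one_smul]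
  -- key a.e. identity: 𝓡 ∘ tauB = id
  have hcomp : ∀ b ∈ B, ∀ᵐ x ∂μ, 𝓡 (tauB R b x) = x := by
    intro b hb
    set A : Set (Fin d → ℝ) := tauB R b '' X with hA
    have hAmeas : MeasurableSet A := (hXc.image (htauBc b)).measurableSet
    set nb : Set (Fin d → ℝ) := {y | ¬ 𝓡 y = (Rmat R).mulVec y - vecR b} with hnb
    have hnbmeas : MeasurableSet nb := by
      have : MeasurableSet {y | 𝓡 y = (Rmat R).mulVec y - vecR b} := by
        apply measurableSet_eq_fun h𝓡meas
        have : Continuous fun y : Fin d → ℝ => (Rmat R).mulVec y - vecR b :=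
          ((Rmat R).mulVecLin.continuous_of_finiteDimensional).sub continuous_const
        exact this.measurable
      exact this.compl
    have h0 : μ (nb ∩ A) = 0 := by
      have := h𝓡 b hb
      rw [ae_iff] at this
      rwa [Measure.restrict_apply hnbmeas] at this
    have h1 : (μ.map (tauB R b)) (nb ∩ A) = 0 := by
      have h2 : ((N : ENNReal) • μ) (nb ∩ A) = 0 := by
        simp [Measure.smul_apply, h0]
      rw [← hsum] at h2
      rw [Measure.finset_sum_apply] at h2
      have := (Finset.sum_eq_zero_iff.mp h2) b hb
      exact this
    have h3 : μ (tauB R b ⁻¹' (nb ∩ A)) = 0 := by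
      rwa [← Measure.map_apply (htauBmeas b) (hnbmeas.inter hAmeas)]
    have h4 := measure_eq_zero_iff_ae_notMem.mp h3
    filter_upwards [hXae, h4] with x hxX hxn
    have hmem : tauB R b x ∈ A := ⟨x, hxX, rfl⟩
    have : tauB R b x ∉ nb := fun hc => hxn ⟨hc, hmem⟩
    have heq : 𝓡 (tauB R b x) = (Rmat R).mulVec (tauB R b x) - vecR b := by
      by_contra hc; exact this hc
    rw [heq]
    show (Rmat R).mulVec ((Rmat R)⁻¹.mulVec (x + vecR b)) - vecR b = x
    rw [hRR]
    exact add_sub_cancel_right x (vecR b)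
  -- the key inner product computation
  have key : ∀ l ∈ L, ∀ t : Fin d → ℝ, ∀ f : Lp ℂ 2 μ,
      (inner ℂ (E t) (S l f) : ℂ) =
        (starRingEnd ℂ) (chiB B (-(tauL R l (-t)))) * inner ℂ (E (-(tauL R l (-t)))) f := by
    intro l hl t f
    set s : Fin d → ℝ := -(tauL R l (-t)) with hs
    set u : Fin d → ℝ := vecR l - t with hu
    -- (R⁻¹)ᵀ u = -s
    have hus : ((Rmat R)⁻¹).transpose.mulVec u = -s := by
      rw [Matrix.transpose_nonsing_inv]
      show ((Rmat R).transpose)⁻¹.mulVec u = - - (tauL R l (-t))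
      rw [neg_neg]
      show ((Rmat R).transpose)⁻¹.mulVec u = ((Rmat R).transpose)⁻¹.mulVec (-t + vecR l)
      congr 1
      rw [hu]; abel
    -- continuity of expv in second argument
    have hexpc : ∀ c : Fin d → ℝ, Continuous fun x : Fin d → ℝ => expv c x := by
      intro c
      unfold expv
      apply Complex.continuous_exp.comp
      apply Continuous.mul continuous_const
      exact Complex.continuous_ofReal.comp
        (continuous_finset_sum _ fun i _ => (continuous_const.mul (continuous_apply i)))
    -- integrability
    have hSlf_int : Integrable (fun x => (S l f : (Fin d → ℝ) → ℂ) x) μ :=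
      (Lp.memLp (S l f)).integrable (by norm_num)
    have hg_int : Integrable (fun x => expv (-t) x * (S l f : (Fin d → ℝ) → ℂ) x) μ := by
      have := hSlf_int.bdd_mul ((hexpc (-t)).aestronglyMeasurable)
        (ae_of_all _ fun x => norm_expv_le _ _)
      exact this
    have hinner1 : (inner ℂ (E t) (S l f) : ℂ)
        = ∫ x, expv (-t) x * (S l f : (Fin d → ℝ) → ℂ) x ∂μ := by
      rw [MeasureTheory.L2.inner_def]
      apply integral_congr_ae
      filter_upwards [hE t] with x hx
      rw [RCLike.inner_apply', hx, conj_expv]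
    have hgF : (fun x => expv (-t) x * (S l f : (Fin d → ℝ) → ℂ) x)
        =ᵐ[μ] fun x => expv u x * (f : (Fin d → ℝ) → ℂ) (𝓡 x) := by
      filter_upwards [hS l hl f] with x hx
      rw [hx, ← mul_assoc, ← expv_add_left]
      have : -t + vecR l = u := by rw [hu]; abel
      rw [this]
    have hF_int : Integrable (fun x => expv u x * (f : (Fin d → ℝ) → ℂ) (𝓡 x)) μ :=
      hg_int.congr hgF
    have hint2 : ∫ x, expv (-t) x * (S l f : (Fin d → ℝ) → ℂ) x ∂μ
        = ∫ x, expv u x * (f : (Fin d → ℝ) → ℂ) (𝓡 x) ∂μ := integral_congr_ae hgF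
    have hF_int_map : ∀ b ∈ B,
        Integrable (fun x => expv u x * (f : (Fin d → ℝ) → ℂ) (𝓡 x)) (μ.map (tauB R b)) := by
      intro b hb
      apply Integrable.mono_measure (hF_int.smul_measure (c := (N : ENNReal)) (by simp))
      rw [← hsum]
      apply Measure.le_iff.mpr
      intro sset hset
      rw [Measure.finset_sum_apply]
      exact Finset.single_le_sum (f := fun b' => (μ.map (tauB R b')) sset) (fun b' _ => zero_le) hb
    have hstep : ∫ x, expv u x * (f : (Fin d → ℝ) → ℂ) (𝓡 x) ∂μ
        = ((N : ENNReal)⁻¹).toReal • ∑ b ∈ B,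
            ∫ x, expv u x * (f : (Fin d → ℝ) → ℂ) (𝓡 x) ∂(μ.map (tauB R b)) := by
      exact integral_split μ B (tauB R) N hμinv _ hF_int_map
    have hterm : ∀ b ∈ B, ∫ x, expv u x * (f : (Fin d → ℝ) → ℂ) (𝓡 x) ∂(μ.map (tauB R b))
        = expv (-s) (vecR b) * ∫ x, expv (-s) x * (f : (Fin d → ℝ) → ℂ) x ∂μ := by
      intro b hb
      rw [integral_map (htauBmeas b).aemeasurable (hF_int_map b hb).1]
      have hae : (fun x => expv u (tauB R b x) * (f : (Fin d → ℝ) → ℂ) (𝓡 (tauB R b x)))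
          =ᵐ[μ] fun x => expv (-s) (vecR b) * (expv (-s) x * (f : (Fin d → ℝ) → ℂ) x) := by
        filter_upwards [hcomp b hb] with x hx
        rw [hx]
        show expv u ((Rmat R)⁻¹.mulVec (x + vecR b)) * _ = _
        rw [expv_mulVec, hus, expv_add_right]
        ring
      rw [integral_congr_ae hae, integral_const_mul]
    have hIs : (inner ℂ (E s) f : ℂ) = ∫ x, expv (-s) x * (f : (Fin d → ℝ) → ℂ) x ∂μ := by
      rw [MeasureTheory.L2.inner_def]
      apply integral_congr_ae
      filter_upwards [hE s] with x hx
      rw [RCLike.inner_apply', hx, conj_expv]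
    have hconj : (starRingEnd ℂ) (chiB B s) = (N : ℂ)⁻¹ * ∑ b ∈ B, expv (-s) (vecR b) := by
      unfold chiB
      rw [_root_.map_mul, map_inv₀, map_sum]
      congr 1
      · rw [hBcard]; simp
      · exact Finset.sum_congr rfl fun b _ => by rw [conj_expv, expv_neg_comm]
    rw [hinner1, hint2, hstep]
    rw [Finset.sum_congr rfl hterm, ← Finset.sum_mul, hIs, hconj]
    rw [ENNReal.toReal_inv, ENNReal.toReal_natCast]
    simp only [Complex.real_smul]
    push_cast
    ring
  refine ⟨?_, ?_⟩
  · intro l hl t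
    apply ext_inner_right ℂ
    intro f
    rw [ContinuousLinearMap.adjoint_inner_left, key l hl t f, inner_smul_left]
  · intro H hHclosed hred t htH l hl hne
    have h1 := (hred l hl (E t) htH).2
    have hpart1 : ContinuousLinearMap.adjoint (S l) (E t) =
        chiB B (-(tauL R l (-t))) • E (-(tauL R l (-t))) := by
      apply ext_inner_right ℂ
      intro f
      rw [ContinuousLinearMap.adjoint_inner_left, key l hl t f, inner_smul_left]
    rw [hpart1] at h1
    have h2 := H.smul_mem (chiB B (-(tauL R l (-t))))⁻¹ h1
    rwa [smul_smul, inv_mul_cancel₀ hne, one_smul] at h2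
end
end

section
/- Let w be a minimal word over L of length p. Then: (i) the operators ρ_w(S_l), l ∈ L, satisfy the Cuntz relations ρ_w(S_l)* ρ_w(S_{l'}) = δ_{l,l'} I and Σ_{l∈L} ρ_w(S_l) ρ_w(S_l)* = I, and this representation is irreducible, i.e., every bounded operator on ℓ²(Γ(w)) commuting with all ρ_w(S_l) and all ρ_w(S_l)* is a scalar multiple of the identity; (ii) the subspace K_w spanned by {δ_{w̄}, δ_{σ(w̄)}, …, δ_{σ^{p−1}(w̄)}} satisfies ρ_w(S_l)* K_w ⊂ K_w for all l ∈ L, and K_w is cyclic: the smallest closed subspace of ℓ²(Γ(w)) containing K_w and invariant under all ρ_w(S_l) is ℓ²(Γ(w)) itself. -/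
open Complex Filter Topology
open scoped Classical

noncomputable section

/-- The infinite word `w̄ = www…` obtained by repeating `w`. -/
def periodicWord {A : Type*} (w : List A) (hw : w ≠ []) : ℕ → A :=
  fun n => w.get ⟨n % w.length, Nat.mod_lt _ (List.length_pos_iff.mpr hw)⟩

/-- Concatenation of a letter with an infinite word. -/
def consWord {A : Type*} (l : A) (ω : ℕ → A) : ℕ → A :=
  fun n => if n = 0 then l else ω (n - 1)

/-- Concatenation of a finite word with an infinite word. -/
def appendWord {A : Type*} (u : List A) (ω : ℕ → A) : ℕ → A :=
  fun n => if h : n < u.length then u.get ⟨n, h⟩ else ω (n - u.length)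

/-- `Γ(w)`: infinite words ending in an infinite repetition of `w`. -/
def GammaW {A : Type*} (w : List A) (hw : w ≠ []) : Set (ℕ → A) :=
  {ω | ∃ u : List A, ω = appendWord u (periodicWord w hw)}

/-- A word is minimal if it is not a power `u^p`, `p ≥ 2`, of a shorter word. -/
def MinimalWord {A : Type*} (w : List A) : Prop :=
  w ≠ [] ∧ ∀ (u : List A) (p : ℕ), 2 ≤ p → w ≠ (List.replicate p u).flatten

section myaux
set_option linter.unusedSectionVars false

variable {A : Type*}

lemma consWord_shift (l : A) (ω : ℕ → A) : (fun n => consWord l ω (n+1)) = ω := by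
  funext n; simp [consWord]

lemma consWord_eta (ω : ℕ → A) : consWord (ω 0) (fun n => ω (n+1)) = ω := by
  funext n; cases n <;> simp [consWord]

lemma consWord_inj {l l' : A} {ω ω' : ℕ → A} (h : consWord l ω = consWord l' ω') :
    l = l' ∧ ω = ω' := by
  constructor
  · have := congrFun h 0; simpa [consWord] using this
  · rw [← consWord_shift l ω, ← consWord_shift l' ω', h]

lemma appendWord_nil (P : ℕ → A) : appendWord [] P = P := by funext n; simp [appendWord]

lemma appendWord_cons (l : A) (u : List A) (P : ℕ → A) :
    appendWord (l :: u) P = consWord l (appendWord u P) := by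
  funext n
  cases n with
  | zero => simp [appendWord, consWord]
  | succ m =>
    simp only [appendWord, consWord, List.length_cons, if_neg (Nat.succ_ne_zero m),
      Nat.add_sub_cancel, Nat.sub_zero]
    rcases lt_or_ge m u.length with h | h
    · rw [dif_pos (by omega : m + 1 < u.length + 1), dif_pos h]
      simp [List.get_eq_getElem]
    · rw [dif_neg (by omega : ¬ m + 1 < u.length + 1), dif_neg (by omega : ¬ m < u.length)]
      congr 1
      omega

lemma get_congr (w : List A) {i j : ℕ} (hi : i < w.length) (hj : j < w.length)
    (h : i = j) : w.get ⟨i, hi⟩ = w.get ⟨j, hj⟩ := by subst h; rfl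

lemma getElem_congr' (w : List A) {i j : ℕ} (hi : i < w.length) (hj : j < w.length)
    (h : i = j) : w[i]'hi = w[j]'hj := by subst h; rfl

lemma periodicWord_add_length (w : List A) (hw : w ≠ []) (n : ℕ) :
    periodicWord w hw (n + w.length) = periodicWord w hw n := by
  simp [periodicWord, Nat.add_mod_right]

lemma shift_periodicWord (w : List A) (hw : w ≠ []) :
    (fun n => periodicWord w hw (n+1)) = appendWord (w.drop 1) (periodicWord w hw) := by
  funext n
  have hp : 0 < w.length := List.length_pos_iff.mpr hw
  simp only [appendWord, periodicWord, List.length_drop]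
  split_ifs with h
  · have h1 : n + 1 < w.length := by omega
    rw [get_congr w _ (by omega : 1 + n < w.length) (by rw [Nat.mod_eq_of_lt h1]; omega)]
    simp only [List.get_eq_getElem, List.getElem_drop]
  · exact get_congr w _ _ (by rw [show n + 1 = (n - (w.length - 1)) + w.length from by omega,
      Nat.add_mod_right])

lemma shift_mem {w : List A} {hw : w ≠ []} {ω : ℕ → A} (h : ω ∈ GammaW w hw) :
    (fun n => ω (n+1)) ∈ GammaW w hw := by
  obtain ⟨u, rfl⟩ := h
  cases u with
  | nil =>
    rw [appendWord_nil]
    exact ⟨w.drop 1, shift_periodicWord w hw⟩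
  | cons l u =>
    rw [appendWord_cons, consWord_shift]
    exact ⟨u, rfl⟩

lemma cons_mem {w : List A} {hw : w ≠ []} {ω : ℕ → A} (l : A) (h : ω ∈ GammaW w hw) :
    consWord l ω ∈ GammaW w hw := by
  obtain ⟨u, rfl⟩ := h
  exact ⟨l :: u, (appendWord_cons l u _).symm⟩

section hilbert

set_option linter.unusedSectionVars false

variable {A : Type*} [Fintype A] [DecidableEq A] {w : List A} {hw : w ≠ []}

local notation "HW" => lp (fun _ : GammaW w hw => ℂ) 2

def eW (ω : GammaW w hw) : lp (fun _ : GammaW w hw => ℂ) 2 := lp.single 2 ω 1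

def shiftG (ω : GammaW w hw) : GammaW w hw := ⟨fun n => ω.val (n+1), shift_mem ω.2⟩

def consG (l : A) (ω : GammaW w hw) : GammaW w hw := ⟨consWord l ω.val, cons_mem l ω.2⟩

lemma shiftG_consG (l : A) (ω : GammaW w hw) : shiftG (consG l ω) = ω :=
  Subtype.ext (consWord_shift l ω.val)

lemma consG_eta (ω : GammaW w hw) : consG (ω.val 0) (shiftG ω) = ω :=
  Subtype.ext (consWord_eta ω.val)

lemma consG_val0 (l : A) (ω : GammaW w hw) : (consG l ω).val 0 = l := rfl

lemma coord (f : lp (fun _ : GammaW w hw => ℂ) 2) (ω : GammaW w hw) :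
    @inner ℂ _ _ (eW ω) f = f ω := by
  rw [eW, lp.inner_single_left]
  simp

lemma inner_eW (ω ω' : GammaW w hw) :
    @inner ℂ _ _ (eW ω) (eW ω') = if ω = ω' then (1:ℂ) else 0 := by
  rw [coord, eW, lp.single_apply]
  by_cases h : ω = ω'
  · subst h; simp
  · simp [h]

lemma hasSum_eW (f : lp (fun _ : GammaW w hw => ℂ) 2) :
    HasSum (fun ω => f ω • eW ω) f := by
  have h := lp.hasSum_single (E := fun _ : GammaW w hw => ℂ) ENNReal.ofNat_ne_top f
  convert h using 2 with ω
  rw [eW, ← lp.single_smul, smul_eq_mul, mul_one]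

lemma ext_eW {T S : (lp (fun _ : GammaW w hw => ℂ) 2) →L[ℂ] (lp (fun _ : GammaW w hw => ℂ) 2)}
    (h : ∀ ω, T (eW ω) = S (eW ω)) : T = S := by
  refine ContinuousLinearMap.ext fun f => ?_
  have h1 : HasSum (fun ω => f ω • T (eW ω)) (T f) := by
    simpa only [map_smul] using (hasSum_eW f).mapL T
  have h2 : HasSum (fun ω => f ω • S (eW ω)) (S f) := by
    simpa only [map_smul] using (hasSum_eW f).mapL S
  simp_rw [h] at h1
  exact h1.unique h2

end hilbert

section rho

set_option linter.unusedSectionVars false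

variable {A : Type*} [Fintype A] [DecidableEq A] {w : List A} {hw : w ≠ []}
variable {ρ : A → (lp (fun _ : GammaW w hw => ℂ) 2 →L[ℂ] lp (fun _ : GammaW w hw => ℂ) 2)}
variable (hρ : ∀ (l : A) (ω : GammaW w hw), ∃ h : consWord l (ω : ℕ → A) ∈ GammaW w hw,
      ρ l (lp.single 2 ω 1) = lp.single 2 ⟨consWord l (ω : ℕ → A), h⟩ 1)

include hρ

lemma rho_e (l : A) (ω : GammaW w hw) : ρ l (eW ω) = eW (consG l ω) :=
  (hρ l ω).choose_spec

lemma adj_e (l : A) (ω : GammaW w hw) :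
    (ContinuousLinearMap.adjoint (ρ l)) (eW ω) =
      if ω.val 0 = l then eW (shiftG ω) else 0 := by
  apply lp.ext
  funext ω'
  have lhs : ((ContinuousLinearMap.adjoint (ρ l)) (eW ω) : ∀ _ : GammaW w hw, ℂ) ω'
      = if consG l ω' = ω then (1:ℂ) else 0 := by
    rw [← coord, ContinuousLinearMap.adjoint_inner_right, rho_e hρ, inner_eW]
  rw [lhs]
  by_cases h0 : ω.val 0 = l
  · rw [if_pos h0, eW, lp.single_apply]
    by_cases h : ω' = shiftG ω
    · subst h
      rw [if_pos (by rw [← h0, consG_eta]), Pi.single_eq_same]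
    · rw [Pi.single_eq_of_ne h, if_neg]
      intro hc
      exact h (by rw [← hc, shiftG_consG])
  · rw [if_neg h0, if_neg, lp.coeFn_zero, Pi.zero_apply]
    intro hc
    exact h0 (by rw [← hc, consG_val0])

lemma cuntz_a (l l' : A) :
    (ContinuousLinearMap.adjoint (ρ l)).comp (ρ l') =
      if l = l' then (1 : lp (fun _ : GammaW w hw => ℂ) 2 →L[ℂ] lp (fun _ : GammaW w hw => ℂ) 2)
        else 0 := by
  apply ext_eW
  intro ω
  rw [ContinuousLinearMap.comp_apply, rho_e hρ, adj_e hρ, consG_val0]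
  by_cases h : l' = l
  · subst h
    rw [if_pos rfl, if_pos rfl, shiftG_consG, ContinuousLinearMap.one_apply]
  · rw [if_neg h, if_neg (fun hc => h hc.symm), ContinuousLinearMap.zero_apply]

lemma cuntz_b :
    ∑ l : A, (ρ l).comp (ContinuousLinearMap.adjoint (ρ l)) = 1 := by
  apply ext_eW
  intro ω
  rw [ContinuousLinearMap.sum_apply, ContinuousLinearMap.one_apply]
  have : ∀ l : A, ((ρ l).comp (ContinuousLinearMap.adjoint (ρ l))) (eW ω)
      = if ω.val 0 = l then eW ω else 0 := by
    intro l
    rw [ContinuousLinearMap.comp_apply, adj_e hρ]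
    by_cases h : ω.val 0 = l
    · rw [if_pos h, if_pos h, rho_e hρ, ← h, consG_eta]
    · rw [if_neg h, if_neg h, map_zero]
  simp_rw [this]
  rw [Finset.sum_ite_eq Finset.univ (ω.val 0) (fun _ => eW ω), if_pos (Finset.mem_univ _)]

lemma shiftG_iter_eq (u : List A) (ω : GammaW w hw)
    (h : ω.val = appendWord u (periodicWord w hw)) :
    shiftG^[u.length] ω = ⟨periodicWord w hw, [], (appendWord_nil _).symm⟩ := by
  induction u generalizing ω with
  | nil =>
    refine Subtype.ext ?_
    simp only [List.length_nil, Function.iterate_zero, id_eq]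
    rw [h, appendWord_nil]
  | cons l u ih =>
    rw [List.length_cons, Function.iterate_succ_apply]
    refine ih (shiftG ω) ?_
    show (fun n => ω.val (n+1)) = _
    rw [h, appendWord_cons, consWord_shift]

lemma irred (T : lp (fun _ : GammaW w hw => ℂ) 2 →L[ℂ] lp (fun _ : GammaW w hw => ℂ) 2)
    (hT : ∀ l : A, T.comp (ρ l) = (ρ l).comp T ∧
      T.comp (ContinuousLinearMap.adjoint (ρ l)) =
        (ContinuousLinearMap.adjoint (ρ l)).comp T) :
    ∃ c : ℂ, T = c • (1 : lp (fun _ : GammaW w hw => ℂ) 2 →L[ℂ]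
      lp (fun _ : GammaW w hw => ℂ) 2) := by
  have hcomm : ∀ (l : A) (x : lp (fun _ : GammaW w hw => ℂ) 2), T (ρ l x) = ρ l (T x) :=
    fun l x => ContinuousLinearMap.ext_iff.mp (hT l).1 x
  set t : GammaW w hw → GammaW w hw → ℂ :=
    fun ω ω' => @inner ℂ _ _ (eW ω) (T (eW ω')) with ht
  have hR1 : ∀ (l : A) (ω ω' : GammaW w hw), t (consG l ω) (consG l ω') = t ω ω' := by
    intro l ω ω'
    rw [ht]
    simp only
    rw [← rho_e hρ, ← rho_e hρ, hcomm, ← ContinuousLinearMap.adjoint_inner_right,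
      ← ContinuousLinearMap.comp_apply, cuntz_a hρ, if_pos rfl,
      ContinuousLinearMap.one_apply]
  have hR2 : ∀ (ω ω' : GammaW w hw), ω.val 0 = ω'.val 0 →
      t ω ω' = t (shiftG ω) (shiftG ω') := by
    intro ω ω' h0
    conv_lhs => rw [← consG_eta ω, ← consG_eta ω', ← h0]
    exact hR1 _ _ _
  have hR3 : ∀ (ω ω' : GammaW w hw), ω.val 0 ≠ ω'.val 0 → t ω ω' = 0 := by
    intro ω ω' h0
    rw [ht]
    simp only
    rw [← consG_eta ω', ← rho_e hρ, hcomm, ← ContinuousLinearMap.adjoint_inner_left,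
      adj_e hρ, if_neg h0, inner_zero_left]
  have hoff : ∀ (n : ℕ) (ω ω' : GammaW w hw), ω.val n ≠ ω'.val n → t ω ω' = 0 := by
    intro n
    induction n with
    | zero => exact hR3
    | succ n ih =>
      intro ω ω' h
      by_cases h0 : ω.val 0 = ω'.val 0
      · rw [hR2 _ _ h0]
        exact ih (shiftG ω) (shiftG ω') h
      · exact hR3 _ _ h0
  have hiter : ∀ (k : ℕ) (ω : GammaW w hw), t ω ω = t (shiftG^[k] ω) (shiftG^[k] ω) := by
    intro k
    induction k with
    | zero => intro ω; rfl
    | succ k ih =>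
      intro ω
      rw [Function.iterate_succ_apply, ← ih (shiftG ω)]
      exact hR2 ω ω rfl
  set W : GammaW w hw := ⟨periodicWord w hw, [], (appendWord_nil _).symm⟩ with hWdef
  set c : ℂ := t W W with hc
  have hdiag : ∀ ω : GammaW w hw, t ω ω = c := by
    intro ω
    obtain ⟨u, hu⟩ := ω.2
    rw [hiter u.length ω, shiftG_iter_eq hρ u ω hu]
  refine ⟨c, ext_eW fun ω' => ?_⟩
  apply lp.ext
  funext ω
  have lhs : (T (eW ω') : ∀ _ : GammaW w hw, ℂ) ω = t ω ω' := by rw [← coord]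
  rw [lhs]
  have rhs : ((c • (1 : lp (fun _ : GammaW w hw => ℂ) 2 →L[ℂ]
      lp (fun _ : GammaW w hw => ℂ) 2)) (eW ω') : ∀ _ : GammaW w hw, ℂ) ω
      = c * (if ω = ω' then 1 else 0) := by
    rw [ContinuousLinearMap.smul_apply, ContinuousLinearMap.one_apply, ← coord,
      inner_smul_right, inner_eW]
  rw [rhs]
  by_cases h : ω = ω'
  · subst h
    rw [if_pos rfl, mul_one, hdiag]
  · rw [if_neg h, mul_zero]
    have : ω.val ≠ ω'.val := fun hv => h (Subtype.ext hv)
    obtain ⟨n, hn⟩ := Function.ne_iff.mp this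
    exact hoff n ω ω' hn

lemma eW_mem (V : Submodule ℂ (lp (fun _ : GammaW w hw => ℂ) 2))
    (hV : ∀ l : A, ∀ x ∈ V, ρ l x ∈ V)
    (hW : eW (⟨periodicWord w hw, [], (appendWord_nil _).symm⟩ : GammaW w hw) ∈ V) :
    ∀ (u : List A) (ω : GammaW w hw), ω.val = appendWord u (periodicWord w hw) → eW ω ∈ V := by
  intro u
  induction u with
  | nil =>
    intro ω h
    have hω : ω = ⟨periodicWord w hw, [], (appendWord_nil _).symm⟩ :=
      Subtype.ext (by rw [h]; exact appendWord_nil _)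
    rw [hω]; exact hW
  | cons l u ih =>
    intro ω h
    have h2 : ω = consG l ⟨appendWord u (periodicWord w hw), ⟨u, rfl⟩⟩ :=
      Subtype.ext (by rw [h, appendWord_cons]; rfl)
    rw [h2, ← rho_e hρ]
    exact hV l _ (ih _ rfl)

end rho


end myaux

theorem stmt8 {A : Type*} [Fintype A] [DecidableEq A]
    (N : ℕ) (hN : Fintype.card A = N) (hN2 : 2 ≤ N)
    (w : List A) (hw : w ≠ []) (hmin : MinimalWord w)
    (ρ : A → (lp (fun _ : GammaW w hw => ℂ) 2 →L[ℂ] lp (fun _ : GammaW w hw => ℂ) 2))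
    (hρ : ∀ (l : A) (ω : GammaW w hw), ∃ h : consWord l (ω : ℕ → A) ∈ GammaW w hw,
      ρ l (lp.single 2 ω 1) = lp.single 2 ⟨consWord l (ω : ℕ → A), h⟩ 1) :
    -- (i) Cuntz relations and irreducibility
    ((∀ l l' : A, (ContinuousLinearMap.adjoint (ρ l)).comp (ρ l') =
        if l = l' then 1 else 0) ∧
      (∑ l : A, (ρ l).comp (ContinuousLinearMap.adjoint (ρ l)) = 1) ∧
      (∀ T : lp (fun _ : GammaW w hw => ℂ) 2 →L[ℂ] lp (fun _ : GammaW w hw => ℂ) 2,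
        (∀ l : A, T.comp (ρ l) = (ρ l).comp T ∧
          T.comp (ContinuousLinearMap.adjoint (ρ l)) =
            (ContinuousLinearMap.adjoint (ρ l)).comp T) →
        ∃ c : ℂ, T = c • (1 : lp (fun _ : GammaW w hw => ℂ) 2 →L[ℂ]
          lp (fun _ : GammaW w hw => ℂ) 2))) ∧
    -- (ii) the subspace K_w spanned by the δ's at the shifts of w̄
    (∀ Kw : Submodule ℂ (lp (fun _ : GammaW w hw => ℂ) 2),
      Kw = Submodule.span ℂ {x | ∃ ω : GammaW w hw,
        (∃ j, j < w.length ∧ (ω : ℕ → A) = fun n => periodicWord w hw (n + j)) ∧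
        x = lp.single 2 ω 1} →
      (∀ l : A, ∀ x ∈ Kw, ContinuousLinearMap.adjoint (ρ l) x ∈ Kw) ∧
      (∀ V : Submodule ℂ (lp (fun _ : GammaW w hw => ℂ) 2),
        IsClosed (V : Set (lp (fun _ : GammaW w hw => ℂ) 2)) →
        Kw ≤ V → (∀ l : A, ∀ x ∈ V, ρ l x ∈ V) → V = ⊤)) := by
  have hp : 0 < w.length := List.length_pos_iff.mpr hw
  refine ⟨⟨cuntz_a hρ, cuntz_b hρ, irred hρ⟩, ?_⟩
  intro Kw hK
  constructor
  · -- adjoint invariance of Kw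
    intro l x hx
    rw [hK] at hx ⊢
    have hle : Submodule.span ℂ {x | ∃ ω : GammaW w hw,
          (∃ j, j < w.length ∧ (ω : ℕ → A) = fun n => periodicWord w hw (n + j)) ∧
          x = lp.single 2 ω 1} ≤ Submodule.comap
        ((ContinuousLinearMap.adjoint (ρ l)).toLinearMap)
        (Submodule.span ℂ {x | ∃ ω : GammaW w hw,
          (∃ j, j < w.length ∧ (ω : ℕ → A) = fun n => periodicWord w hw (n + j)) ∧
          x = lp.single 2 ω 1}) := by
      rw [Submodule.span_le]
      rintro x ⟨ω, ⟨j, hj, hval⟩, rfl⟩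
      simp only [Set.mem_setOf_eq, SetLike.mem_coe, Submodule.mem_comap,
        ContinuousLinearMap.coe_coe]
      have : ContinuousLinearMap.adjoint (ρ l) (eW ω) =
          if ω.val 0 = l then eW (shiftG ω) else 0 := adj_e hρ l ω
      rw [show (lp.single 2 ω 1 : lp (fun _ : GammaW w hw => ℂ) 2) = eW ω from rfl, this]
      by_cases h0 : ω.val 0 = l
      · rw [if_pos h0]
        refine Submodule.subset_span ⟨shiftG ω, ⟨if j + 1 < w.length then j + 1 else 0, ?_, ?_⟩, rfl⟩
        · split_ifs with h1
          · exact h1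
          · exact hp
        · funext n
          show ω.val (n + 1) = _
          rw [hval]
          simp only
          split_ifs with h1
          · congr 1; omega
          · have hj1 : j + 1 = w.length := by omega
            have : n + 1 + j = (n + 0) + w.length := by omega
            rw [this, periodicWord_add_length]
      · rw [if_neg h0]
        exact Submodule.zero_mem _
    exact hle hx
  · -- cyclicity
    intro V hVc hKV hV
    have hWmem : eW (⟨periodicWord w hw, [], (appendWord_nil _).symm⟩ : GammaW w hw) ∈ V := by
      apply hKV
      rw [hK]
      exact Submodule.subset_span ⟨_, ⟨0, hp, funext fun n => rfl⟩, rfl⟩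
    have heW : ∀ ω : GammaW w hw, eW ω ∈ V := by
      intro ω
      obtain ⟨u, hu⟩ := ω.2
      exact eW_mem hρ V hV hWmem u ω hu
    rw [eq_top_iff]
    intro f _
    have hs := hasSum_eW f
    refine hVc.mem_of_tendsto hs (Filter.Eventually.of_forall fun s => ?_)
    exact Submodule.sum_mem V fun ω _ => V.smul_mem _ (heW ω)
end
end

section
/- Let M_1 and M_2 be L-invariant sets with dist(M_1,M_2) > 0. Then for all t_1 ∈ M_1 and t_2 ∈ M_2 there exists n ∈ ℕ such that for every word w ∈ L^n of length n, χ_B^{(n)}(τ_w t_1) · χ_B^{(n)}(τ_w t_2) = 0. -/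
open Complex Filter Topology

noncomputable section

def IsLCycle {d : ℕ} (R : Matrix (Fin d) (Fin d) ℤ) (L : Finset (Fin d → ℤ))
    (C : Set (Fin d → ℝ)) : Prop :=
  ∃ p : ℕ, ∃ x : Fin (p + 1) → (Fin d → ℝ), ∃ l : Fin (p + 1) → (Fin d → ℤ),
    Function.Injective x ∧ (∀ i, l i ∈ L) ∧
    (∀ i, tauL R (l i) (x i) = x (i + 1)) ∧ C = Set.range x

def BExtreme {d : ℕ} (B : Finset (Fin d → ℤ)) (C : Set (Fin d → ℝ)) : Prop :=
  ∀ x ∈ C, ‖chiB B x‖ = 1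

/-- `M` is `L`-invariant: possible transitions starting in `M` stay in `M`. -/
def LInvariant {d : ℕ} (R : Matrix (Fin d) (Fin d) ℤ) (B L : Finset (Fin d → ℤ))
    (M : Set (Fin d → ℝ)) : Prop :=
  ∀ x ∈ M, ∀ l ∈ L, chiB B (tauL R l x) ≠ 0 → tauL R l x ∈ M

/-- The orbit `O(x)`: all points reachable from `x` by finitely many possible
transitions. -/
def orbitO {d : ℕ} (R : Matrix (Fin d) (Fin d) ℤ) (B L : Finset (Fin d → ℤ))
    (x : Fin d → ℝ) : Set (Fin d → ℝ) :=
  {y | ∃ n : ℕ, ∃ z : Fin (n + 1) → (Fin d → ℝ), z 0 = x ∧ z (Fin.last n) = y ∧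
    ∀ i : Fin n, ∃ l ∈ L,
      tauL R l (z i.castSucc) = z i.succ ∧ chiB B (z i.succ) ≠ 0}

/-- A minimal (nonempty) closed `L`-invariant set. -/
def IsMinimalInv {d : ℕ} (R : Matrix (Fin d) (Fin d) ℤ) (B L : Finset (Fin d → ℤ))
    (M : Set (Fin d → ℝ)) : Prop :=
  M.Nonempty ∧ IsClosed M ∧ LInvariant R B L M ∧
    ∀ M' ⊆ M, M'.Nonempty → IsClosed M' → LInvariant R B L M' → M' = M

/-- Two sets are separated when they are at positive `dist'`-distance. -/
def SepSets {d : ℕ} (dist' : (Fin d → ℝ) → (Fin d → ℝ) → ℝ)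
    (M₁ M₂ : Set (Fin d → ℝ)) : Prop :=
  ∃ δ > 0, ∀ x ∈ M₁, ∀ y ∈ M₂, δ ≤ dist' x y

/-- `χ_B^{(n)}(x) = χ_B(x) χ_B(Rᵀ x) ⋯ χ_B((Rᵀ)^{n-1} x)`. -/
def chiBn {d : ℕ} (R : Matrix (Fin d) (Fin d) ℤ) (B : Finset (Fin d → ℤ))
    (n : ℕ) (x : Fin d → ℝ) : ℂ :=
  ∏ k ∈ Finset.range n, chiB B (((Rmat R).transpose ^ k).mulVec x)

/-- `τ_w = τ_{l_n} ∘ ⋯ ∘ τ_{l_1}` for `w = l_1 … l_n`. -/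
def tauW {d : ℕ} (R : Matrix (Fin d) (Fin d) ℤ) (w : List (Fin d → ℤ))
    (x : Fin d → ℝ) : Fin d → ℝ :=
  w.foldl (fun y l => tauL R l y) x


lemma aux_det_ne_zero {d : ℕ} (R : Matrix (Fin d) (Fin d) ℤ) (hRexp : Expansive R) :
    (Rmat R).det ≠ 0 := by
  have h1 : (Rmat R).det = ((R.det : ℤ) : ℝ) := by
    rw [Rmat, show (Int.cast : ℤ → ℝ) = (Int.castRingHom ℝ) from rfl,
      ← RingHom.mapMatrix_apply, ← RingHom.map_det]
  rw [h1]
  intro h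
  have hz : R.det = 0 := by exact_mod_cast h
  have h2 : (R.map (Int.cast : ℤ → ℂ)).det = 0 := by
    rw [show (Int.cast : ℤ → ℂ) = (Int.castRingHom ℂ) from rfl,
      ← RingHom.mapMatrix_apply, ← RingHom.map_det, hz]
    simp
  have h3 := Matrix.det_eq_sign_charpoly_coeff (R.map (Int.cast : ℤ → ℂ))
  rw [h2] at h3
  have hc : (R.map (Int.cast : ℤ → ℂ)).charpoly.coeff 0 = 0 := by
    rcases mul_eq_zero.mp h3.symm with h | h
    · exact absurd h (pow_ne_zero _ (neg_ne_zero.mpr one_ne_zero))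
    · exact h
  have hroot : (R.map (Int.cast : ℤ → ℂ)).charpoly.IsRoot 0 := by
    rwa [Polynomial.IsRoot, ← Polynomial.coeff_zero_eq_eval_zero]
  have := hRexp 0 hroot
  simp at this
  linarith

lemma aux_chiB_add_int {d : ℕ} (B : Finset (Fin d → ℤ)) (x : Fin d → ℝ)
    (m : Fin d → ℤ) : chiB B (x + vecR m) = chiB B x := by
  unfold chiB expv
  congr 1
  refine Finset.sum_congr rfl fun b _ => ?_
  have hsum : (∑ i, vecR b i * (x + vecR m) i)
      = (∑ i, vecR b i * x i) + ((∑ i, b i * m i : ℤ) : ℝ) := by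
    push_cast
    rw [← Finset.sum_add_distrib]
    refine Finset.sum_congr rfl fun i _ => ?_
    simp [vecR]
    ring
  rw [hsum, Complex.ofReal_add, mul_add, Complex.exp_add, Complex.ofReal_intCast]
  have : Complex.exp (2 * Real.pi * Complex.I * ((∑ i, b i * m i : ℤ) : ℂ)) = 1 := by
    rw [show 2 * (Real.pi : ℂ) * Complex.I * ((∑ i, b i * m i : ℤ) : ℂ)
        = ((∑ i, b i * m i : ℤ) : ℂ) * (2 * Real.pi * Complex.I) by ring]
    exact Complex.exp_int_mul_two_pi_mul_I _
  rw [this, mul_one]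

lemma aux_pow_mulVec_int {d : ℕ} (R : Matrix (Fin d) (Fin d) ℤ) (k : ℕ)
    (m : Fin d → ℤ) :
    ((Rmat R).transpose ^ k).mulVec (vecR m)
      = vecR ((R.transpose ^ k).mulVec m) := by
  have h1 : (Rmat R).transpose = R.transpose.map (Int.cast : ℤ → ℝ) := by
    rw [Rmat, Matrix.transpose_map]
  have hmap : (Rmat R).transpose ^ k = (R.transpose ^ k).map (Int.cast : ℤ → ℝ) := by
    rw [h1]
    exact ((map_pow ((Int.castRingHom ℝ)).mapMatrix R.transpose k)).symm
  rw [hmap]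
  funext i
  simp [Matrix.mulVec, dotProduct, vecR, Matrix.map_apply]

lemma aux_chiBn_add_int {d : ℕ} (R : Matrix (Fin d) (Fin d) ℤ)
    (B : Finset (Fin d → ℤ)) (n : ℕ) (y : Fin d → ℝ) (m : Fin d → ℤ) :
    chiBn R B n (y + vecR m) = chiBn R B n y := by
  unfold chiBn
  refine Finset.prod_congr rfl fun k _ => ?_
  rw [Matrix.mulVec_add, aux_pow_mulVec_int, aux_chiB_add_int]

lemma aux_chiBn_succ {d : ℕ} (R : Matrix (Fin d) (Fin d) ℤ)
    (B : Finset (Fin d → ℤ)) (n : ℕ) (z : Fin d → ℝ) :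
    chiBn R B (n + 1) z = chiB B z * chiBn R B n ((Rmat R).transpose.mulVec z) := by
  unfold chiBn
  have h3 : (∏ k ∈ Finset.range n, chiB B (((Rmat R).transpose ^ (k + 1)).mulVec z))
      = ∏ k ∈ Finset.range n,
        chiB B (((Rmat R).transpose ^ k).mulVec ((Rmat R).transpose.mulVec z)) :=
    Finset.prod_congr rfl fun k _ => by rw [pow_succ, ← Matrix.mulVec_mulVec]
  rw [Finset.prod_range_succ', pow_zero, Matrix.one_mulVec, h3, mul_comm]

lemma aux_RT_tauL {d : ℕ} (R : Matrix (Fin d) (Fin d) ℤ)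
    (hdet : (Rmat R).det ≠ 0) (l : Fin d → ℤ) (x : Fin d → ℝ) :
    (Rmat R).transpose.mulVec (tauL R l x) = x + vecR l := by
  unfold tauL
  have hu : IsUnit ((Rmat R).transpose).det := by
    rw [Matrix.det_transpose]; exact isUnit_iff_ne_zero.mpr hdet
  rw [Matrix.mulVec_mulVec, Matrix.mul_nonsing_inv _ hu, Matrix.one_mulVec]

lemma aux_chiBn_tauL {d : ℕ} (R : Matrix (Fin d) (Fin d) ℤ)
    (hdet : (Rmat R).det ≠ 0) (B : Finset (Fin d → ℤ)) (n : ℕ)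
    (l : Fin d → ℤ) (y : Fin d → ℝ) :
    chiBn R B (n + 1) (tauL R l y) = chiB B (tauL R l y) * chiBn R B n y := by
  rw [aux_chiBn_succ, aux_RT_tauL R hdet, aux_chiBn_add_int]


lemma aux_tauW_append {d : ℕ} (R : Matrix (Fin d) (Fin d) ℤ)
    (w : List (Fin d → ℤ)) (l : Fin d → ℤ) (x : Fin d → ℝ) :
    tauW R (w ++ [l]) x = tauL R l (tauW R w x) := by
  simp [tauW, List.foldl_append]

lemma aux_mem_of_chiBn {d : ℕ} (R : Matrix (Fin d) (Fin d) ℤ)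
    (hdet : (Rmat R).det ≠ 0) (B L : Finset (Fin d → ℤ))
    (M : Set (Fin d → ℝ)) (hM : LInvariant R B L M) :
    ∀ w : List (Fin d → ℤ), (∀ l ∈ w, l ∈ L) → ∀ x ∈ M,
      chiBn R B w.length (tauW R w x) ≠ 0 → tauW R w x ∈ M := by
  intro w
  induction w using List.reverseRecOn with
  | nil => intro _ x hx _; simpa [tauW] using hx
  | append_singleton w l ih =>
    intro hw x hx hne
    rw [aux_tauW_append] at hne ⊢
    have hlen : (w ++ [l]).length = w.length + 1 := by simp
    rw [hlen, aux_chiBn_tauL R hdet] at hne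
    have h1 : chiB B (tauL R l (tauW R w x)) ≠ 0 := left_ne_zero_of_mul hne
    have h2 : chiBn R B w.length (tauW R w x) ≠ 0 := right_ne_zero_of_mul hne
    have hwmem : ∀ l' ∈ w, l' ∈ L := fun l' h => hw l' (List.mem_append_left _ h)
    have hlm : l ∈ L := hw l (by simp)
    exact hM _ (ih hwmem x hx h2) l hlm h1

lemma aux_contract {d : ℕ} (R : Matrix (Fin d) (Fin d) ℤ) (L : Finset (Fin d → ℤ))
    (dist' : (Fin d → ℝ) → (Fin d → ℝ) → ℝ) (c : ℝ) (hc0 : 0 ≤ c)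
    (hcon : ∀ l ∈ L, ∀ x y, dist' (tauL R l x) (tauL R l y) ≤ c * dist' x y) :
    ∀ w : List (Fin d → ℤ), (∀ l ∈ w, l ∈ L) → ∀ x y,
      dist' (tauW R w x) (tauW R w y) ≤ c ^ w.length * dist' x y := by
  intro w
  induction w with
  | nil => intro _ x y; simp [tauW]
  | cons l w ih =>
    intro hw x y
    have h1 : ∀ z, tauW R (l :: w) z = tauW R w (tauL R l z) := fun z => rfl
    rw [h1 x, h1 y]
    calc dist' (tauW R w (tauL R l x)) (tauW R w (tauL R l y))
        ≤ c ^ w.length * dist' (tauL R l x) (tauL R l y) :=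
          ih (fun l' h => hw l' (List.mem_cons_of_mem _ h)) _ _
      _ ≤ c ^ w.length * (c * dist' x y) :=
          mul_le_mul_of_nonneg_left (hcon l (hw l (List.mem_cons_self)) x y)
            (pow_nonneg hc0 _)
      _ = c ^ (l :: w).length * dist' x y := by
          rw [List.length_cons, pow_succ]; ring

theorem stmt14
    (d N : ℕ) (R : Matrix (Fin d) (Fin d) ℤ) (hRexp : Expansive R)
    (B L : Finset (Fin d → ℤ))
    (hB0 : (0 : Fin d → ℤ) ∈ B) (hBcard : B.card = N)
    (hL0 : (0 : Fin d → ℤ) ∈ L) (hLcard : L.card = N)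
    (dist' : (Fin d → ℝ) → (Fin d → ℝ) → ℝ)
    (hd0 : ∀ x y, dist' x y = 0 ↔ x = y)
    (hdsymm : ∀ x y, dist' x y = dist' y x)
    (hdtri : ∀ x y z, dist' x z ≤ dist' x y + dist' y z)
    (hdtop : ∀ s : Set (Fin d → ℝ),
      IsOpen s ↔ ∀ x ∈ s, ∃ ε > 0, ∀ y, dist' x y < ε → y ∈ s)
    (hcontr : ∃ c, 0 ≤ c ∧ c < 1 ∧ ∀ l ∈ L, ∀ x y,
      dist' (tauL R l x) (tauL R l y) ≤ c * dist' x y)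
    (M₁ M₂ : Set (Fin d → ℝ))
    (hM₁ : LInvariant R B L M₁) (hM₂ : LInvariant R B L M₂)
    (hsep : SepSets dist' M₁ M₂) :
    ∀ t₁ ∈ M₁, ∀ t₂ ∈ M₂, ∃ n : ℕ, ∀ w : List (Fin d → ℤ),
      w.length = n → (∀ l ∈ w, l ∈ L) →
      chiBn R B n (tauW R w t₁) * chiBn R B n (tauW R w t₂) = 0 := by
  intro t₁ ht₁ t₂ ht₂
  obtain ⟨δ, hδ, hsepd⟩ := hsep
  obtain ⟨c, hc0, hc1, hcon⟩ := hcontr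
  have hdet := aux_det_ne_zero R hRexp
  have hD : δ ≤ dist' t₁ t₂ := hsepd t₁ ht₁ t₂ ht₂
  have hDpos : 0 < dist' t₁ t₂ := lt_of_lt_of_le hδ hD
  obtain ⟨n, hn⟩ : ∃ n : ℕ, c ^ n < δ / dist' t₁ t₂ :=
    exists_pow_lt_of_lt_one (div_pos hδ hDpos) hc1
  refine ⟨n, fun w hwlen hwL => ?_⟩
  by_contra hne
  have h1 : chiBn R B n (tauW R w t₁) ≠ 0 := left_ne_zero_of_mul hne
  have h2 : chiBn R B n (tauW R w t₂) ≠ 0 := right_ne_zero_of_mul hne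
  rw [← hwlen] at h1 h2
  have m1 : tauW R w t₁ ∈ M₁ := aux_mem_of_chiBn R hdet B L M₁ hM₁ w hwL t₁ ht₁ h1
  have m2 : tauW R w t₂ ∈ M₂ := aux_mem_of_chiBn R hdet B L M₂ hM₂ w hwL t₂ ht₂ h2
  have hle := aux_contract R L dist' c hc0 hcon w hwL t₁ t₂
  have hged : δ ≤ dist' (tauW R w t₁) (tauW R w t₂) := hsepd _ m1 _ m2
  have hlt : c ^ w.length * dist' t₁ t₂ < δ := by
    rw [hwlen]
    exact (lt_div_iff₀ hDpos).mp hn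
  linarith
end
end
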